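/- arXiv:0905.0739 — 3 statements merged into one kernel-verified Lean document; each statement's English description precedes it below -/
import Mathlib

section
/- Let (X,d) be a compact metric space, f : X → X continuous, and φ : X → ℝ continuous. The sequence (1/n)S_nφ converges uniformly to a constant c if and only if φ lies in the closure (in the sup norm) of the set of functions cohomologous to c, i.e., the closure of {c + ψ∘f − ψ : ψ ∈ C(X)}. -/
open Filter

/-- On a compact metric space, `(1/n) S_n φ` converges uniformly to the
constant `c` iff `φ` lies in the sup-norm closure of
`Cob(X,f,c) = {c + ψ∘f − ψ : ψ ∈ C(X)}`. -/
theorem stmt2 {X : Type*} [MetricSpace X] [CompactSpace X]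
    (f : X → X) (hf : Continuous f) (φ : C(X, ℝ)) (c : ℝ) :
    TendstoUniformly (fun (n : ℕ) (x : X) =>
        (∑ i ∈ Finset.range n, φ (f^[i] x)) / n) (fun _ => c) atTop
      ↔ φ ∈ closure {χ : C(X, ℝ) |
          ∃ ψ : C(X, ℝ), χ = ContinuousMap.const X c + ψ.comp ⟨f, hf⟩ - ψ} := by
  constructor
  · intro h
    rw [Metric.mem_closure_iff]
    intro ε hε
    rw [Metric.tendstoUniformly_iff] at h
    obtain ⟨N, hNε, hN1⟩ := ((h ε hε).and (eventually_ge_atTop 1)).exists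
    have hNpos : (0:ℝ) < N := by exact_mod_cast hN1
    set φ' : C(X, ℝ) := φ - ContinuousMap.const X c with hφ'
    set ψ : C(X, ℝ) := -((N:ℝ)⁻¹ • ∑ n ∈ Finset.range N, ∑ i ∈ Finset.range n,
        φ'.comp ⟨f^[i], hf.iterate i⟩) with hψ
    refine ⟨ContinuousMap.const X c + ψ.comp ⟨f, hf⟩ - ψ, ⟨ψ, rfl⟩, ?_⟩
    rw [dist_eq_norm, ContinuousMap.norm_lt_iff _ hε]
    intro x
    have key : (φ - (ContinuousMap.const X c + ψ.comp ⟨f, hf⟩ - ψ)) x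
        = (∑ i ∈ Finset.range N, φ (f^[i] x)) / N - c := by
      have hψx : ∀ y : X, ψ y
          = -((N:ℝ)⁻¹ * ∑ n ∈ Finset.range N, ∑ i ∈ Finset.range n, (φ (f^[i] y) - c)) := by
        intro y
        simp [hψ, hφ', ContinuousMap.sum_apply, Finset.sum_apply]
      have hiter : ∀ i : ℕ, f^[i] (f x) = f^[i+1] x := by
        intro i; exact (Function.iterate_succ_apply f i x).symm
      have htel : ∑ n ∈ Finset.range N, ∑ i ∈ Finset.range n, (φ (f^[i] (f x)) - c)
          = (∑ n ∈ Finset.range N, ∑ i ∈ Finset.range n, (φ (f^[i] x) - c))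
            + (∑ i ∈ Finset.range N, (φ (f^[i] x) - c)) - N * (φ x - c) := by
        have h1 : ∀ n : ℕ, ∑ i ∈ Finset.range n, (φ (f^[i] (f x)) - c)
            = (∑ i ∈ Finset.range (n+1), (φ (f^[i] x) - c)) - (φ x - c) := by
          intro n
          have e1 : ∑ i ∈ Finset.range n, (φ (f^[i] (f x)) - c)
              = ∑ i ∈ Finset.range n, (φ (f^[i+1] x) - c) :=
            Finset.sum_congr rfl fun i _ => by rw [hiter]
          rw [e1, Finset.sum_range_succ' (fun i => (φ (f^[i] x) - c)) n]
          simp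
        rw [Finset.sum_congr rfl fun n _ => h1 n, Finset.sum_sub_distrib]
        simp only [Finset.sum_const, Finset.card_range, nsmul_eq_mul]
        congr 1
        rw [Finset.sum_congr rfl fun n _ =>
          Finset.sum_range_succ (fun i => (φ (f^[i] x) - c)) n, Finset.sum_add_distrib]
      have hN0 : (N:ℝ) ≠ 0 := ne_of_gt hNpos
      have hB : ∑ i ∈ Finset.range N, (φ (f^[i] x) - c)
          = (∑ i ∈ Finset.range N, φ (f^[i] x)) - N * c := by
        rw [Finset.sum_sub_distrib]; simp [mul_comm]
      simp only [ContinuousMap.sub_apply, ContinuousMap.add_apply, ContinuousMap.comp_apply,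
        ContinuousMap.const_apply, ContinuousMap.coe_mk]
      rw [hψx, hψx, htel, hB]
      field_simp
      ring
    rw [key]
    have hd := hNε x
    rw [Real.dist_eq, abs_sub_comm] at hd
    exact hd
  · intro h
    rw [Metric.tendstoUniformly_iff]
    intro ε hε
    obtain ⟨χ, ⟨ψ, rfl⟩, hχ⟩ := Metric.mem_closure_iff.mp h (ε/2) (by linarith)
    rw [dist_eq_norm] at hχ
    set χ : C(X, ℝ) := ContinuousMap.const X c + ψ.comp ⟨f, hf⟩ - ψ with hχdef
    set δ := ‖φ - χ‖ with hδ
    have hδ0 : (0:ℝ) ≤ δ := norm_nonneg _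
    have hεδ : 0 < ε - δ := by linarith
    obtain ⟨n₀, hn₀⟩ := exists_nat_gt (2 * ‖ψ‖ / (ε - δ))
    filter_upwards [eventually_ge_atTop (n₀ + 1)] with n hn x
    have hn1 : 1 ≤ n := le_trans (Nat.le_add_left 1 n₀) hn
    have hnpos : (0:ℝ) < n := by exact_mod_cast hn1
    have hnn : (2 * ‖ψ‖ / (ε - δ)) < n := by
      calc (2 * ‖ψ‖ / (ε - δ)) < n₀ := hn₀
        _ ≤ n := by exact_mod_cast le_trans (Nat.le_succ n₀) hn
    have hψn : 2 * ‖ψ‖ / n < ε - δ := by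
      rw [div_lt_iff₀ hnpos]
      rw [div_lt_iff₀ hεδ] at hnn
      linarith [hnn]
    -- decompose the Birkhoff sum
    have hiter : ∀ i : ℕ, f (f^[i] x) = f^[i+1] x := by
      intro i; exact (Function.iterate_succ_apply' f i x).symm
    have hsplit : ∑ i ∈ Finset.range n, φ (f^[i] x)
        = (∑ i ∈ Finset.range n, (φ - χ) (f^[i] x)) + (n * c + ψ (f^[n] x) - ψ x) := by
      have h1 : ∀ i : ℕ, φ (f^[i] x)
          = (φ - χ) (f^[i] x) + (c + (ψ (f^[i+1] x) - ψ (f^[i] x))) := by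
        intro i
        simp [hχdef, ← hiter i]
        ring
      rw [Finset.sum_congr rfl fun i _ => h1 i, Finset.sum_add_distrib]
      rw [Finset.sum_add_distrib, Finset.sum_range_sub (fun i => ψ (f^[i] x))]
      simp
      ring
    have hT : |∑ i ∈ Finset.range n, (φ - χ) (f^[i] x)| ≤ n * δ := by
      calc |∑ i ∈ Finset.range n, (φ - χ) (f^[i] x)|
          ≤ ∑ i ∈ Finset.range n, |(φ - χ) (f^[i] x)| := Finset.abs_sum_le_sum_abs _ _
        _ ≤ ∑ i ∈ Finset.range n, δ := by
            refine Finset.sum_le_sum fun i _ => ?_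
            exact (φ - χ).norm_coe_le_norm (f^[i] x)
        _ = n * δ := by simp [mul_comm]
    have hψb : |ψ (f^[n] x) - ψ x| ≤ 2 * ‖ψ‖ := by
      calc |ψ (f^[n] x) - ψ x| ≤ |ψ (f^[n] x)| + |ψ x| := abs_sub _ _
        _ ≤ ‖ψ‖ + ‖ψ‖ := add_le_add (ψ.norm_coe_le_norm _) (ψ.norm_coe_le_norm _)
        _ = 2 * ‖ψ‖ := by ring
    rw [Real.dist_eq, abs_sub_comm]
    have heq : (∑ i ∈ Finset.range n, φ (f^[i] x)) / n - c
        = ((∑ i ∈ Finset.range n, (φ - χ) (f^[i] x)) + (ψ (f^[n] x) - ψ x)) / n := by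
      rw [hsplit]; field_simp; ring
    rw [heq]
    rw [abs_div, abs_of_pos hnpos, div_lt_iff₀ hnpos]
    calc |(∑ i ∈ Finset.range n, (φ - χ) (f^[i] x)) + (ψ (f^[n] x) - ψ x)|
        ≤ |∑ i ∈ Finset.range n, (φ - χ) (f^[i] x)| + |ψ (f^[n] x) - ψ x| := abs_add_le _ _
      _ ≤ n * δ + 2 * ‖ψ‖ := add_le_add hT hψb
      _ < ε * n := by
          have h2 : 2 * ‖ψ‖ < (ε - δ) * n := (div_lt_iff₀ hnpos).mp hψn
          nlinarith
end

section
/- Let μ be an ergodic f-invariant Borel probability measure on a compact metric space X, let ξ be a finite Borel partition with h_μ(f,ξ) finite, let δ > 0 and let U be an open set with μ(U) ≤ δ, and let Z ⊆ X with μ(Z) > 0. Then there exist a Borel set A ⊆ Z with μ(A) ≥ μ(Z) − δ and N ∈ ℕ such that for all x ∈ A and n ≥ N: (1) #{0 ≤ l ≤ n−1 : f^l x ∈ U} ≤ 2δn, and (2) μ(C_{ξ_n}(x)) ≤ exp(−(h_μ(f,ξ) − δ)n). -/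
set_option linter.unusedSectionVars false
set_option linter.unusedVariables false

open Filter MeasureTheory Set

section Garsia

variable {X : Type*} [MeasurableSpace X] {μ : MeasureTheory.Measure X} {f : X → X} {g : X → ℝ}

/-- Birkhoff sum `∑_{i<n} g(f^i x)`. -/
noncomputable def bS (f : X → X) (g : X → ℝ) (n : ℕ) (x : X) : ℝ :=
  ∑ i ∈ Finset.range n, g (f^[i] x)

lemma bS_succ' (f : X → X) (g : X → ℝ) (n : ℕ) (x : X) :
    bS f g (n + 1) x = g x + bS f g n (f x) := by
  unfold bS
  rw [Finset.sum_range_succ']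
  simp only [Function.iterate_succ_apply, Function.iterate_zero_apply]
  ring

lemma bS_measurable (hf : Measurable f) (hg : Measurable g) (n : ℕ) :
    Measurable (bS f g n) := by
  apply Finset.measurable_sum
  intro i _
  exact hg.comp (hf.iterate i)

lemma integrable_comp_iterate (hfm : MeasurePreserving f μ μ) (hg : Measurable g)
    (hgi : Integrable g μ) (i : ℕ) : Integrable (fun x => g (f^[i] x)) μ := by
  have := (memLp_one_iff_integrable.2 hgi).comp_measurePreserving (hfm.iterate i)
  exact memLp_one_iff_integrable.1 this

lemma bS_integrable (hfm : MeasurePreserving f μ μ) (hg : Measurable g)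
    (hgi : Integrable g μ) (n : ℕ) : Integrable (bS f g n) μ := by
  unfold bS
  apply integrable_finset_sum
  intro i _
  exact integrable_comp_iterate hfm hg hgi i

/-- `maxS N x = max_{1 ≤ n ≤ N+1} S_n x`. -/
noncomputable def maxS (f : X → X) (g : X → ℝ) : ℕ → X → ℝ
  | 0 => g
  | (N + 1) => fun x => max (maxS f g N x) (bS f g (N + 2) x)

lemma bS_le_maxS {n N : ℕ} (h1 : 1 ≤ n) (h2 : n ≤ N + 1) (x : X) :
    bS f g n x ≤ maxS f g N x := by
  induction N with
  | zero =>
    interval_cases n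
    simp [maxS, bS, Finset.sum_range_one]
  | succ N ih =>
    rcases Nat.lt_or_ge n (N + 2) with hn | hn
    · exact le_trans (ih (by omega)) (le_max_left _ _)
    · have : n = N + 2 := by omega
      subst this
      exact le_max_right _ _
lemma maxS_eq_bS (N : ℕ) (x : X) : ∃ n, 1 ≤ n ∧ n ≤ N + 1 ∧ maxS f g N x = bS f g n x := by
  induction N with
  | zero => exact ⟨1, le_rfl, le_rfl, by simp [maxS, bS, Finset.sum_range_one]⟩
  | succ N ih =>
    obtain ⟨n, h1, h2, h3⟩ := ih
    rcases le_total (bS f g (N + 2) x) (maxS f g N x) with h | h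
    · refine ⟨n, h1, by omega, ?_⟩
      rw [show maxS f g (N + 1) x = max (maxS f g N x) (bS f g (N + 2) x) from rfl,
        max_eq_left h, h3]
    · exact ⟨N + 2, by omega, by omega, by simp [maxS, max_eq_right h]⟩

lemma maxS_measurable (hf : Measurable f) (hg : Measurable g) (N : ℕ) :
    Measurable (maxS f g N) := by
  induction N with
  | zero => exact hg
  | succ N ih => exact ih.max (bS_measurable hf hg (N + 2))

lemma maxS_integrable (hfm : MeasurePreserving f μ μ) (hg : Measurable g)
    (hgi : Integrable g μ) (N : ℕ) : Integrable (maxS f g N) μ := by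
  induction N with
  | zero => exact hgi
  | succ N ih => exact ih.sup (bS_integrable hfm hg hgi (N + 2))

lemma maxS_mono {N : ℕ} (x : X) : maxS f g N x ≤ maxS f g (N + 1) x := le_max_left _ _

/-- Key inequality for Garsia's proof. -/
lemma maxS_key (N : ℕ) (x : X) :
    maxS f g N x ≤ g x + max 0 (maxS f g N (f x)) := by
  obtain ⟨n, h1, h2, h3⟩ := maxS_eq_bS (f := f) (g := g) N x
  rw [h3]
  obtain ⟨m, rfl⟩ : ∃ m, n = m + 1 := ⟨n - 1, by omega⟩
  rw [bS_succ']
  rcases Nat.eq_zero_or_pos m with hm | hm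
  · subst hm
    simp [bS]
  · have : bS f g m (f x) ≤ maxS f g N (f x) := bS_le_maxS hm (by omega) (f x)
    have h0 : bS f g m (f x) ≤ max 0 (maxS f g N (f x)) := le_trans this (le_max_right _ _)
    linarith

/-- **Maximal ergodic theorem** (Garsia's lemma). -/
theorem garsia [IsFiniteMeasure μ] (hfm : MeasurePreserving f μ μ) (hf : Measurable f)
    (hg : Measurable g) (hgi : Integrable g μ) :
    0 ≤ ∫ x in {x | ∃ n, 1 ≤ n ∧ 0 < bS f g n x}, g x ∂μ := by
  set E : ℕ → Set X := fun N => {x | 0 < maxS f g N x} with hE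
  have hEmeas : ∀ N, MeasurableSet (E N) :=
    fun N => measurableSet_lt measurable_const (maxS_measurable hf hg N)
  have hEmono : Monotone E := by
    intro a b hab x hx
    simp only [hE, mem_setOf_eq] at hx ⊢
    induction b with
    | zero => simpa [Nat.le_zero.1 hab] using hx
    | succ b ih =>
      rcases Nat.lt_or_ge a (b + 1) with h' | h'
      · exact lt_of_lt_of_le (ih (by omega)) (maxS_mono x)
      · have : a = b + 1 := by omega
        subst this; exact hx
  have hEU : (⋃ N, E N) = {x | ∃ n, 1 ≤ n ∧ 0 < bS f g n x} := by
    ext x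
    simp only [mem_iUnion, hE, mem_setOf_eq]
    constructor
    · rintro ⟨N, hN⟩
      obtain ⟨n, h1, h2, h3⟩ := maxS_eq_bS (f := f) (g := g) N x
      exact ⟨n, h1, h3 ▸ hN⟩
    · rintro ⟨n, h1, h2⟩
      exact ⟨n - 1, lt_of_lt_of_le h2 (bS_le_maxS h1 (by omega) x)⟩
  have hstep : ∀ N, 0 ≤ ∫ x in E N, g x ∂μ := by
    intro N
    set P : X → ℝ := fun x => max 0 (maxS f g N x) with hP
    have hPmeas : Measurable P := measurable_const.max (maxS_measurable hf hg N)
    have hPint : Integrable P μ := (integrable_const (0:ℝ)).sup (maxS_integrable hfm hg hgi N)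
    have hPf_int : Integrable (fun x => P (f x)) μ := by
      have := (memLp_one_iff_integrable.2 hPint).comp_measurePreserving hfm
      exact memLp_one_iff_integrable.1 this
    have key : ∀ x ∈ E N, maxS f g N x - P (f x) ≤ g x := by
      intro x _
      have := maxS_key (f := f) (g := g) N x
      simp only [hP]; linarith
    have h1 : ∫ x in E N, (maxS f g N x - P (f x)) ∂μ ≤ ∫ x in E N, g x ∂μ := by
      apply setIntegral_mono_on
      · exact ((maxS_integrable hfm hg hgi N).sub hPf_int).integrableOn
      · exact hgi.integrableOn
      · exact hEmeas N
      · exact key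
    have h2 : ∫ x in E N, (maxS f g N x - P (f x)) ∂μ
        = ∫ x in E N, maxS f g N x ∂μ - ∫ x in E N, P (f x) ∂μ :=
      integral_sub (maxS_integrable hfm hg hgi N).integrableOn hPf_int.integrableOn
    have h3 : ∫ x in E N, maxS f g N x ∂μ = ∫ x, P x ∂μ := by
      rw [← integral_indicator (hEmeas N)]
      congr 1
      funext x
      by_cases hx : x ∈ E N
      · simp only [indicator_of_mem hx, hP]
        have : 0 < maxS f g N x := hx
        rw [max_eq_right this.le]
      · simp only [indicator_of_notMem hx, hP]
        have : ¬ (0 < maxS f g N x) := hx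
        rw [max_eq_left (by linarith [not_lt.1 this])]
    have h4 : ∫ x in E N, P (f x) ∂μ ≤ ∫ x, P (f x) ∂μ := by
      apply setIntegral_le_integral hPf_int
      filter_upwards with x
      exact le_max_left _ _
    have h5 : ∫ x, P (f x) ∂μ = ∫ x, P x ∂μ := by
      rw [← integral_map hfm.measurable.aemeasurable
        (hPmeas.stronglyMeasurable.aestronglyMeasurable), hfm.map_eq]
    linarith
  have hlim : Tendsto (fun N => ∫ x in E N, g x ∂μ) atTop
      (nhds (∫ x in ⋃ N, E N, g x ∂μ)) :=
    tendsto_setIntegral_of_monotone hEmeas hEmono hgi.integrableOn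
  rw [← hEU]
  exact ge_of_tendsto' hlim hstep



lemma bS_neg (f : X → X) (g : X → ℝ) (n : ℕ) (x : X) :
    bS f (fun y => -g y) n x = -bS f g n x := by
  simp [bS, Finset.sum_neg_distrib]

lemma bS_sub_const (f : X → X) (g : X → ℝ) (c : ℝ) (n : ℕ) (x : X) :
    bS f (fun y => g y - c) n x = bS f g n x - c * n := by
  simp [bS, Finset.sum_sub_distrib, mul_comm]

/-- For fixed `x`, a frequent lower bound at slope `c'` for the Birkhoff sums of `f x`
transfers to slope `c < c'` for `x`. -/
lemma freq_step_down {x : X} {c c' : ℝ} (hcc : c < c')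
    (h : ∃ᶠ n in atTop, c' * n < bS f g n (f x)) :
    ∃ᶠ n in atTop, c * n < bS f g n x := by
  rw [frequently_atTop] at h ⊢
  intro N
  obtain ⟨N₀, hN₀⟩ : ∃ N₀ : ℕ, c - g x ≤ (c' - c) * N₀ := by
    obtain ⟨N₀, hN₀⟩ := exists_nat_ge ((c - g x) / (c' - c))
    exact ⟨N₀, by rw [div_le_iff₀ (by linarith)] at hN₀; linarith⟩
  obtain ⟨n, hn1, hn2⟩ := h (max N N₀)
  refine ⟨n + 1, by omega, ?_⟩
  rw [bS_succ']
  have hn0 : (N₀ : ℝ) ≤ n := by exact_mod_cast le_trans (le_max_right N N₀) hn1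
  have : (c' - c) * N₀ ≤ (c' - c) * n := by nlinarith [sub_pos.2 hcc]
  push_cast
  nlinarith

lemma freq_step_up {x : X} {c c' : ℝ} (hcc : c < c')
    (h : ∃ᶠ n in atTop, c' * n < bS f g n x) :
    ∃ᶠ n in atTop, c * n < bS f g n (f x) := by
  rw [frequently_atTop] at h ⊢
  intro N
  obtain ⟨N₀, hN₀⟩ : ∃ N₀ : ℕ, g x - c' ≤ (c' - c) * N₀ := by
    obtain ⟨N₀, hN₀⟩ := exists_nat_ge ((g x - c') / (c' - c))
    exact ⟨N₀, by rw [div_le_iff₀ (by linarith)] at hN₀; linarith⟩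
  obtain ⟨n, hn1, hn2⟩ := h (max (N + 1) (N₀ + 1))
  obtain ⟨m, rfl⟩ : ∃ m, n = m + 1 := ⟨n - 1, by omega⟩
  refine ⟨m, by omega, ?_⟩
  rw [bS_succ'] at hn2
  have hn0 : (N₀ : ℝ) ≤ m := by
    have : N₀ + 1 ≤ m + 1 := le_trans (le_max_right _ _) hn1
    exact_mod_cast by omega
  have : (c' - c) * N₀ ≤ (c' - c) * m := by nlinarith [sub_pos.2 hcc]
  push_cast at hn2 ⊢
  nlinarith

/-- The robust frequent-upcrossing set. -/
def TT (f : X → X) (g : X → ℝ) (b : ℝ) : Set X :=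
  {x | ∀ m : ℕ, ∃ᶠ n in atTop, (b - 1 / (m + 1)) * n < bS f g n x}

lemma TT_invariant (f : X → X) (g : X → ℝ) (b : ℝ) : f ⁻¹' TT f g b = TT f g b := by
  ext x
  simp only [mem_preimage, TT, mem_setOf_eq]
  constructor
  · intro h m
    have h2 := h (2 * m + 1)
    apply freq_step_down (x := x) (c := b - 1 / (m + 1)) (c' := b - 1 / (2 * m + 1 + 1))
    · have h1 : (0:ℝ) < m + 1 := by positivity
      have h2 : (0:ℝ) < 2 * m + 1 + 1 := by positivity
      rw [sub_lt_sub_iff_left, div_lt_div_iff₀ h2 h1]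
      push_cast; nlinarith
    · exact_mod_cast h2
  · intro h m
    have h2 := h (2 * m + 1)
    apply freq_step_up (x := x) (c := b - 1 / (m + 1)) (c' := b - 1 / (2 * m + 1 + 1))
    · have h1 : (0:ℝ) < m + 1 := by positivity
      have h2 : (0:ℝ) < 2 * m + 1 + 1 := by positivity
      rw [sub_lt_sub_iff_left, div_lt_div_iff₀ h2 h1]
      push_cast; nlinarith
    · exact_mod_cast h2

lemma TT_measurable (hf : Measurable f) (hg : Measurable g) (b : ℝ) :
    MeasurableSet (TT f g b) := by
  have : TT f g b = ⋂ m : ℕ, ⋂ N : ℕ, ⋃ n : ℕ, ⋃ _ : N ≤ n,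
      {x | (b - 1 / (m + 1)) * n < bS f g n x} := by
    ext x
    simp only [TT, mem_setOf_eq, mem_iInter, mem_iUnion]
    refine ⟨fun h m N => ?_, fun h m => ?_⟩
    · obtain ⟨n, hn1, hn2⟩ := frequently_atTop.1 (h m) N
      exact ⟨n, hn1, hn2⟩
    · rw [frequently_atTop]
      intro N
      obtain ⟨n, hn1, hn2⟩ := h m N
      exact ⟨n, hn1, hn2⟩
  rw [this]
  refine MeasurableSet.iInter fun m => MeasurableSet.iInter fun N =>
    MeasurableSet.iUnion fun n => MeasurableSet.iUnion fun _ => ?_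
  exact measurableSet_lt measurable_const (bS_measurable hf hg n)

/-- Upper half: the Birkhoff averages do not frequently exceed the mean. -/
theorem birkhoff_upper_null [IsProbabilityMeasure μ] (herg : Ergodic f μ)
    (hf : Measurable f) (hg : Measurable g) (hgi : Integrable g μ) {ε : ℝ} (hε : 0 < ε) :
    μ {x | ∃ᶠ n in atTop, ((∫ y, g y ∂μ) + ε) * n < bS f g n x} = 0 := by
  set a := ∫ y, g y ∂μ with ha
  have hsub : {x | ∃ᶠ n in atTop, (a + ε) * n < bS f g n x} ⊆ TT f g (a + ε) := by
    intro x hx m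
    refine (hx.mono fun n hn => lt_of_le_of_lt ?_ hn)
    have : (0:ℝ) < 1 / (m + 1) := by positivity
    have hn0 : (0:ℝ) ≤ n := Nat.cast_nonneg n
    nlinarith
  rcases herg.ae_empty_or_univ (TT_measurable hf hg (a + ε)) (TT_invariant f g (a + ε)) with
    hT | hT
  · exact measure_mono_null hsub (ae_eq_empty.1 hT)
  · exfalso
    obtain ⟨m, hm⟩ := exists_nat_one_div_lt (half_pos hε)
    set ψ : X → ℝ := fun y => g y - (a + ε / 2) with hψ
    have hψm : Measurable ψ := hg.sub measurable_const
    have hψi : Integrable ψ μ := hgi.sub (integrable_const _)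
    set E := {x | ∃ n, 1 ≤ n ∧ 0 < bS f ψ n x} with hEdef
    have hTE : TT f g (a + ε) ⊆ E := by
      intro x hx
      obtain ⟨n, hn1, hn2⟩ := frequently_atTop.1 (hx m) 1
      refine ⟨n, hn1, ?_⟩
      rw [hψ, bS_sub_const]
      have h1 : a + ε / 2 ≤ a + ε - 1 / (m + 1) := by linarith
      have hn0 : (0:ℝ) < n := by exact_mod_cast hn1
      nlinarith
    have hEc : μ Eᶜ = 0 := by
      have : (univ : Set X) =ᵐ[μ] TT f g (a + ε) := hT.symm
      have h2 : μ (TT f g (a + ε))ᶜ = 0 := by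
        have := ae_eq_univ.1 hT
        exact this
      exact measure_mono_null (compl_subset_compl.2 hTE) h2
    have hgar := garsia (μ := μ) herg.toMeasurePreserving hf hψm hψi
    have hEmeas : MeasurableSet E := by
      have : E = ⋃ n : ℕ, ⋃ _ : 1 ≤ n, {x | 0 < bS f ψ n x} := by
        ext x; simp [hEdef]
      rw [this]
      exact MeasurableSet.iUnion fun n => MeasurableSet.iUnion fun _ =>
        measurableSet_lt measurable_const (bS_measurable hf hψm n)
    have hsplit : ∫ x in E, ψ x ∂μ + ∫ x in Eᶜ, ψ x ∂μ = ∫ x, ψ x ∂μ :=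
      integral_add_compl hEmeas hψi
    have hc0 : ∫ x in Eᶜ, ψ x ∂μ = 0 := by
      rw [Measure.restrict_eq_zero.2 hEc, integral_zero_measure]
    have hint : ∫ x, ψ x ∂μ = -(ε / 2) := by
      rw [hψ]
      rw [integral_sub hgi (integrable_const _), integral_const]
      simp [ha]
    rw [hc0, add_zero, hint] at hsplit
    rw [← hEdef, hsplit] at hgar
    linarith

theorem birkhoff_lower_null [IsProbabilityMeasure μ] (herg : Ergodic f μ)
    (hf : Measurable f) (hg : Measurable g) (hgi : Integrable g μ) {ε : ℝ} (hε : 0 < ε) :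
    μ {x | ∃ᶠ n in atTop, bS f g n x < ((∫ y, g y ∂μ) - ε) * n} = 0 := by
  have := birkhoff_upper_null (μ := μ) herg hf (hg.neg) (hgi.neg) hε
  have heq : {x | ∃ᶠ n in atTop, bS f g n x < ((∫ y, g y ∂μ) - ε) * n}
      = {x | ∃ᶠ n in atTop, ((∫ y, (fun z => -g z) y ∂μ) + ε) * n
          < bS f (fun z => -g z) n x} := by
    ext x
    rw [mem_setOf_eq, mem_setOf_eq]
    apply frequently_congr
    filter_upwards with n
    rw [bS_neg, integral_neg]
    constructor <;> intro hh <;> nlinarith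
  rw [heq]
  exact this

/-- **Birkhoff's pointwise ergodic theorem** (ergodic case). -/
theorem birkhoff [IsProbabilityMeasure μ] (herg : Ergodic f μ)
    (hf : Measurable f) (hg : Measurable g) (hgi : Integrable g μ) :
    ∀ᵐ x ∂μ, Tendsto (fun n => bS f g n x / n) atTop (nhds (∫ y, g y ∂μ)) := by
  set a := ∫ y, g y ∂μ with ha
  have hae : ∀ᵐ x ∂μ, ∀ m : ℕ,
      (¬ ∃ᶠ n in atTop, (a + 1 / (m + 1)) * n < bS f g n x) ∧
      (¬ ∃ᶠ n in atTop, bS f g n x < (a - 1 / (m + 1)) * n) := by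
    rw [ae_all_iff]
    intro m
    have h1 := birkhoff_upper_null (μ := μ) herg hf hg hgi
      (ε := 1 / (m + 1)) (by positivity)
    have h2 := birkhoff_lower_null (μ := μ) herg hf hg hgi
      (ε := 1 / (m + 1)) (by positivity)
    rw [← ha] at h1 h2
    have e1 : ∀ᵐ x ∂μ, ¬ ∃ᶠ n in atTop, (a + 1 / (m + 1)) * n < bS f g n x := by
      rw [ae_iff, show {x | ¬¬ ∃ᶠ n in atTop, (a + 1 / (m + 1)) * n < bS f g n x}
        = {x | ∃ᶠ n in atTop, (a + 1 / (m + 1)) * n < bS f g n x} by simp only [not_not]]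
      exact h1
    have e2 : ∀ᵐ x ∂μ, ¬ ∃ᶠ n in atTop, bS f g n x < (a - 1 / (m + 1)) * n := by
      rw [ae_iff, show {x | ¬¬ ∃ᶠ n in atTop, bS f g n x < (a - 1 / (m + 1)) * n}
        = {x | ∃ᶠ n in atTop, bS f g n x < (a - 1 / (m + 1)) * n} by simp only [not_not]]
      exact h2
    exact e1.and e2
  filter_upwards [hae] with x hx
  rw [Metric.tendsto_atTop]
  intro ε hε
  obtain ⟨m, hm⟩ := exists_nat_one_div_lt hε
  obtain ⟨h1, h2⟩ := hx m
  rw [not_frequently] at h1 h2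
  have h3 : ∀ᶠ n in atTop, ¬((a + 1 / (m + 1)) * n < bS f g n x)
      ∧ ¬(bS f g n x < (a - 1 / (m + 1)) * n) ∧ 1 ≤ n :=
    (h1.and (h2.and (eventually_ge_atTop 1)))
  rw [eventually_atTop] at h3
  obtain ⟨N, hN⟩ := h3
  refine ⟨N, fun n hn => ?_⟩
  obtain ⟨hu, hl, hn1⟩ := hN n hn
  rw [not_lt] at hu hl
  have hn0 : (0:ℝ) < n := by exact_mod_cast hn1
  have hub : bS f g n x / n ≤ a + 1 / (m + 1) := by
    rw [div_le_iff₀ hn0]; linarith [hu]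
  have hlb : a - 1 / (m + 1) ≤ bS f g n x / n := by
    rw [le_div_iff₀ hn0]; linarith [hl]
  rw [Real.dist_eq]
  have habs : |bS f g n x / n - a| ≤ 1 / (m + 1) :=
    abs_le.2 ⟨by linarith, by linarith⟩
  exact lt_of_le_of_lt habs hm


end Garsia

open scoped ENNReal


section FinFactor

variable {X : Type*} [MeasurableSpace X] {μ : MeasureTheory.Measure X}
variable {ι : Type*} [Fintype ι] [MeasurableSpace ι] [DiscreteMeasurableSpace ι]

lemma measurable_comp_finite {p : X → ι} (hp : Measurable p) (F : ι → ℝ) :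
    Measurable (fun x => F (p x)) :=
  (Measurable.of_discrete (f := F)).comp hp

lemma integrable_comp_finite [IsProbabilityMeasure μ] {p : X → ι} (hp : Measurable p)
    (F : ι → ℝ) : Integrable (fun x => F (p x)) μ := by
  refine (integrable_const (∑ v, |F v|)).mono'
    (measurable_comp_finite hp F).aestronglyMeasurable (ae_of_all _ fun x => ?_)
  rw [Real.norm_eq_abs]
  exact Finset.single_le_sum (f := fun v => |F v|) (fun v _ => abs_nonneg _)
    (Finset.mem_univ (p x))

lemma integral_comp_finite [IsProbabilityMeasure μ] {p : X → ι} (hp : Measurable p)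
    (F : ι → ℝ) : ∫ x, F (p x) ∂μ = ∑ v, (μ (p ⁻¹' {v})).toReal * F v := by
  haveI : IsProbabilityMeasure (μ.map p) := Measure.isProbabilityMeasure_map hp.aemeasurable
  rw [← integral_map hp.aemeasurable
    (Measurable.of_discrete (f := F)).stronglyMeasurable.aestronglyMeasurable,
    integral_fintype (Integrable.of_finite)]
  refine Finset.sum_congr rfl fun v _ => ?_
  rw [Measure.real, Measure.map_apply hp (measurableSet_singleton v), smul_eq_mul]

lemma setIntegral_comp_finite [IsProbabilityMeasure μ] {p : X → ι} (hp : Measurable p)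
    (F : ι → ℝ) (t : Finset ι) :
    ∫ x in p ⁻¹' ↑t, F (p x) ∂μ = ∑ v ∈ t, (μ (p ⁻¹' {v})).toReal * F v := by
  classical
  rw [← integral_indicator (hp (Set.to_countable _).measurableSet)]
  have heq : (p ⁻¹' ↑t).indicator (fun x => F (p x))
      = fun x => ((↑t : Set ι).indicator F) (p x) := by
    funext x
    by_cases hx : p x ∈ (↑t : Set ι)
    · rw [Set.indicator_of_mem hx, Set.indicator_of_mem (by exact hx)]
    · rw [Set.indicator_of_notMem hx, Set.indicator_of_notMem (by exact hx)]
  rw [heq, integral_comp_finite hp]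
  have : ∀ v, (μ (p ⁻¹' {v})).toReal * (↑t : Set ι).indicator F v
      = if v ∈ t then (μ (p ⁻¹' {v})).toReal * F v else 0 := by
    intro v
    by_cases hv : v ∈ t <;> simp [hv]
  simp_rw [this]
  rw [Finset.sum_ite_mem, Finset.univ_inter]

lemma measure_inter_preimage_finset {p : X → ι} (hp : Measurable p) {B : Set X}
    (hB : MeasurableSet B) (t : Finset ι) :
    μ (B ∩ p ⁻¹' ↑t) = ∑ v ∈ t, μ (B ∩ p ⁻¹' {v}) := by
  have hun : B ∩ p ⁻¹' ↑t = ⋃ v ∈ t, (B ∩ p ⁻¹' {v}) := by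
    ext x
    simp only [Set.mem_inter_iff, Set.mem_preimage, Finset.coe_sort_coe, Set.mem_iUnion,
      Set.mem_singleton_iff, Finset.mem_coe]
    constructor
    · rintro ⟨hb, ht⟩; exact ⟨p x, ht, hb, rfl⟩
    · rintro ⟨v, hv, hb, he⟩; exact ⟨hb, he ▸ hv⟩
  rw [hun, measure_biUnion_finset]
  · intro v _ w _ hvw
    refine Set.disjoint_left.2 fun x hx hx' => hvw ?_
    have h1 : p x = v := hx.2
    have h2 : p x = w := hx'.2
    rw [← h1, h2]
  · exact fun v _ => hB.inter (hp (measurableSet_singleton v))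

end FinFactor

section SMBdefs

variable {X : Type*} [MeasurableSpace X] {μ : MeasureTheory.Measure X}
variable {f : X → X} {K : ℕ} {π : X → Fin (K + 1)}

/-- Итинерary maps. -/
def P0 (f : X → X) (π : X → Fin (K + 1)) (n : ℕ) (x : X) : Fin n → Fin (K + 1) :=
  fun i => π (f^[(i : ℕ)] x)

def P1 (f : X → X) (π : X → Fin (K + 1)) (k : ℕ) (x : X) : Fin k → Fin (K + 1) :=
  fun i => π (f^[(i : ℕ) + 1] x)

lemma measurable_P0 (hf : Measurable f) (hπ : Measurable π) (n : ℕ) :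
    Measurable (P0 f π n) :=
  measurable_pi_lambda _ fun i => hπ.comp (hf.iterate _)

lemma measurable_P1 (hf : Measurable f) (hπ : Measurable π) (k : ℕ) :
    Measurable (P1 f π k) :=
  measurable_pi_lambda _ fun i => hπ.comp (hf.iterate _)

def cell (f : X → X) (π : X → Fin (K + 1)) (n : ℕ) (x : X) : Set X :=
  P0 f π n ⁻¹' {P0 f π n x}

def cyl1 (f : X → X) (π : X → Fin (K + 1)) (k : ℕ) (v : Fin k → Fin (K + 1)) : Set X :=
  P1 f π k ⁻¹' {v}

def Bs (π : X → Fin (K + 1)) (s : Fin (K + 1)) : Set X := π ⁻¹' {s}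

lemma measurableSet_Bs (hπ : Measurable π) (s : Fin (K + 1)) : MeasurableSet (Bs π s) :=
  hπ (measurableSet_singleton s)

lemma measurableSet_cyl1 (hf : Measurable f) (hπ : Measurable π) (k : ℕ)
    (v : Fin k → Fin (K + 1)) : MeasurableSet (cyl1 f π k v) :=
  measurable_P1 hf hπ k (measurableSet_singleton v)

/-- The filtration generated by coordinates `1, …, k`. -/
def filt (hf : Measurable f) (hπ : Measurable π) :
    Filtration ℕ (inferInstance : MeasurableSpace X) where
  seq k := MeasurableSpace.comap (P1 f π k) inferInstance
  mono' := by
    intro k l hkl s hs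
    obtain ⟨t, ht, rfl⟩ := hs
    refine ⟨(fun v : Fin l → Fin (K + 1) => (fun i : Fin k => v (Fin.castLE hkl i))) ⁻¹' t,
      (Set.to_countable _).measurableSet, ?_⟩
    rw [← Set.preimage_comp]
    rfl
  le' k := (measurable_P1 hf hπ k).comap_le

lemma filt_measurableSet {hf : Measurable f} {hπ : Measurable π} {k : ℕ} {s : Set X}
    (hs : MeasurableSet[filt hf hπ k] s) :
    ∃ t : Set (Fin k → Fin (K + 1)), P1 f π k ⁻¹' t = s := by
  obtain ⟨t, _, rfl⟩ := hs
  exact ⟨t, rfl⟩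

lemma filt_measurableSet_preimage (hf : Measurable f) (hπ : Measurable π) (k : ℕ)
    (t : Set (Fin k → Fin (K + 1))) : MeasurableSet[filt hf hπ k] (P1 f π k ⁻¹' t) :=
  ⟨t, (Set.to_countable _).measurableSet, rfl⟩

/-- Conditional probability ratio on cylinders. -/
noncomputable def qv (μ : MeasureTheory.Measure X) (f : X → X) (π : X → Fin (K + 1))
    (s : Fin (K + 1)) (k : ℕ) (v : Fin k → Fin (K + 1)) : ℝ :=
  (μ (Bs π s ∩ cyl1 f π k v)).toReal / (μ (cyl1 f π k v)).toReal

noncomputable def q (μ : MeasureTheory.Measure X) (f : X → X) (π : X → Fin (K + 1))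
    (s : Fin (K + 1)) (k : ℕ) (x : X) : ℝ :=
  qv μ f π s k (P1 f π k x)

lemma qv_nonneg (s : Fin (K + 1)) (k : ℕ) (v : Fin k → Fin (K + 1)) :
    0 ≤ qv μ f π s k v :=
  div_nonneg ENNReal.toReal_nonneg ENNReal.toReal_nonneg

lemma qv_le_one [IsProbabilityMeasure μ] (s : Fin (K + 1)) (k : ℕ)
    (v : Fin k → Fin (K + 1)) : qv μ f π s k v ≤ 1 := by
  unfold qv
  rcases eq_or_ne ((μ (cyl1 f π k v)).toReal) 0 with h | h
  · rw [h, div_zero]; norm_num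
  · rw [div_le_one (lt_of_le_of_ne ENNReal.toReal_nonneg (Ne.symm h))]
    exact ENNReal.toReal_mono (measure_ne_top _ _) (measure_mono Set.inter_subset_right)

lemma toReal_mul_qv [IsProbabilityMeasure μ] (s : Fin (K + 1)) (k : ℕ)
    (v : Fin k → Fin (K + 1)) :
    (μ (cyl1 f π k v)).toReal * qv μ f π s k v = (μ (Bs π s ∩ cyl1 f π k v)).toReal := by
  unfold qv
  rcases eq_or_ne (μ (cyl1 f π k v)) 0 with h | h
  · rw [h]
    have : μ (Bs π s ∩ cyl1 f π k v) = 0 :=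
      measure_mono_null Set.inter_subset_right h
    rw [this]
    simp
  · have hne : (μ (cyl1 f π k v)).toReal ≠ 0 :=
      ENNReal.toReal_ne_zero.2 ⟨h, measure_ne_top _ _⟩
    field_simp

lemma measurable_q (hf : Measurable f) (hπ : Measurable π) (s : Fin (K + 1)) (k : ℕ) :
    Measurable (q μ f π s k) :=
  measurable_comp_finite (measurable_P1 hf hπ k) _

/-- `q` is a version of the conditional expectation of the indicator of `Bs s`. -/
lemma q_ae_condexp [IsProbabilityMeasure μ] (hf : Measurable f) (hπ : Measurable π)
    (s : Fin (K + 1)) (k : ℕ) :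
    q μ f π s k =ᵐ[μ] μ[(Bs π s).indicator (fun _ => (1 : ℝ)) | filt hf hπ k] := by
  classical
  have hm : filt hf hπ k ≤ (inferInstance : MeasurableSpace X) := (filt hf hπ).le k
  haveI : IsFiniteMeasure (μ.trim hm) := isFiniteMeasure_trim hm
  refine ae_eq_condExp_of_forall_setIntegral_eq hm
    ((integrable_const (1 : ℝ)).indicator (measurableSet_Bs hπ s))
    (fun t _ _ => (integrable_comp_finite (measurable_P1 hf hπ k) _).integrableOn)
    (fun t ht _ => ?_) ?_
  · obtain ⟨t', rfl⟩ := filt_measurableSet ht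
    have hfin : (P1 f π k ⁻¹' t') = (P1 f π k ⁻¹' ↑(t'.toFinite.toFinset)) := by
      rw [Set.Finite.coe_toFinset]
    rw [hfin]
    simp only [q]
    rw [setIntegral_comp_finite (measurable_P1 hf hπ k) _ _,
      setIntegral_indicator (measurableSet_Bs hπ s)]
    rw [setIntegral_const, smul_eq_mul, mul_one, Measure.real, Set.inter_comm,
      measure_inter_preimage_finset (measurable_P1 hf hπ k) (measurableSet_Bs hπ s),
      ENNReal.toReal_sum (fun v _ => measure_ne_top _ _)]
    exact Finset.sum_congr rfl fun v _ => toReal_mul_qv s k v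
  · refine StronglyMeasurable.aestronglyMeasurable ?_
    refine Measurable.stronglyMeasurable ?_
    intro t ht
    exact ⟨qv μ f π s k ⁻¹' t, (Set.to_countable _).measurableSet, rfl⟩



/-- Conditional expectation w.r.t. the limit σ-algebra. -/
noncomputable def Qinf (hf : Measurable f) (hπ : Measurable π)
    (μ : MeasureTheory.Measure X) (s : Fin (K + 1)) : X → ℝ :=
  μ[(Bs π s).indicator (fun _ => (1 : ℝ)) | ⨆ k, filt hf hπ k]

lemma Qinf_tendsto [IsProbabilityMeasure μ] (hf : Measurable f) (hπ : Measurable π) :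
    ∀ᵐ x ∂μ, ∀ s, Tendsto (fun k => q μ f π s k x) atTop (nhds (Qinf hf hπ μ s x)) := by
  rw [ae_all_iff]
  intro s
  have h1 := MeasureTheory.tendsto_ae_condExp (ℱ := filt hf hπ) (μ := μ)
    ((Bs π s).indicator fun _ => (1 : ℝ))
  have h2 : ∀ᵐ x ∂μ, ∀ k : ℕ,
      q μ f π s k x = (μ[(Bs π s).indicator (fun _ => (1 : ℝ)) | filt hf hπ k]) x :=
    ae_all_iff.2 fun k => q_ae_condexp hf hπ s k
  filter_upwards [h1, h2] with x hx1 hx2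
  exact Tendsto.congr (fun k => (hx2 k).symm) hx1

lemma ae_cell_pos [IsProbabilityMeasure μ] (hf : Measurable f) (hπ : Measurable π) :
    ∀ᵐ x ∂μ, ∀ k, 0 < μ (Bs π (π x) ∩ cyl1 f π k (P1 f π k x)) := by
  rw [ae_all_iff]
  intro k
  set bad := ⋃ s : Fin (K + 1), ⋃ v : Fin k → Fin (K + 1),
    ⋃ (_ : μ (Bs π s ∩ cyl1 f π k v) = 0), (Bs π s ∩ cyl1 f π k v) with hbad_def
  have hbad : μ bad = 0 :=
    measure_iUnion_null fun s => measure_iUnion_null fun v => measure_iUnion_null fun h => h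
  rw [ae_iff]
  refine measure_mono_null (fun x hx => ?_) hbad
  simp only [mem_setOf_eq, not_lt, le_zero_iff] at hx
  refine mem_iUnion.2 ⟨π x, mem_iUnion.2 ⟨P1 f π k x, mem_iUnion.2 ⟨hx, ?_⟩⟩⟩
  exact ⟨rfl, rfl⟩

lemma ae_q_pos [IsProbabilityMeasure μ] (hf : Measurable f) (hπ : Measurable π) :
    ∀ᵐ x ∂μ, ∀ k, 0 < q μ f π (π x) k x := by
  filter_upwards [ae_cell_pos (μ := μ) hf hπ] with x hx k
  have h1 := hx k
  have h2 : 0 < μ (cyl1 f π k (P1 f π k x)) :=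
    lt_of_lt_of_le h1 (measure_mono Set.inter_subset_right)
  unfold q qv
  apply div_pos
  · exact ENNReal.toReal_pos (ne_of_gt h1) (measure_ne_top _ _)
  · exact ENNReal.toReal_pos (ne_of_gt h2) (measure_ne_top _ _)

lemma Qinf_pos [IsProbabilityMeasure μ] (hf : Measurable f) (hπ : Measurable π) :
    ∀ᵐ x ∂μ, 0 < Qinf hf hπ μ (π x) x := by
  have hm : (⨆ k, (filt hf hπ) k) ≤ (inferInstance : MeasurableSpace X) :=
    iSup_le fun k => (filt hf hπ).le k
  have key : ∀ s : Fin (K + 1), μ (Bs π s ∩ {x | Qinf hf hπ μ s x ≤ 0}) = 0 := by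
    intro s
    set t := {x | Qinf hf hπ μ s x ≤ 0} with ht_def
    have htm : MeasurableSet[⨆ k, (filt hf hπ) k] t := by
      exact (stronglyMeasurable_condExp
        (m := ⨆ k, (filt hf hπ) k) (μ := μ)
        (f := (Bs π s).indicator (fun _ => (1 : ℝ)))).measurable
        (measurableSet_Iic : MeasurableSet (Set.Iic (0:ℝ)))
    have htm0 : MeasurableSet t := hm _ htm
    have hint : Integrable ((Bs π s).indicator (fun _ => (1 : ℝ))) μ :=
      (integrable_const (1 : ℝ)).indicator (measurableSet_Bs hπ s)
    have h1 : ∫ x in t, Qinf hf hπ μ s x ∂μ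
        = ∫ x in t, (Bs π s).indicator (fun _ => (1 : ℝ)) x ∂μ :=
      setIntegral_condExp hm hint htm
    have h2 : ∫ x in t, (Bs π s).indicator (fun _ => (1 : ℝ)) x ∂μ
        = (μ (t ∩ Bs π s)).toReal := by
      rw [setIntegral_indicator (measurableSet_Bs hπ s), setIntegral_const, smul_eq_mul, mul_one]
      rfl
    have h3 : ∫ x in t, Qinf hf hπ μ s x ∂μ ≤ 0 := by
      have hnn : ∫ x in t, (-Qinf hf hπ μ s x) ∂μ ≥ 0 :=
        setIntegral_nonneg (μ := μ) htm0 (fun x hx => by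
          have hx' : Qinf hf hπ μ s x ≤ 0 := hx
          linarith)
      rw [integral_neg] at hnn
      linarith
    have h4 : (μ (t ∩ Bs π s)).toReal = 0 := le_antisymm (h2 ▸ h1 ▸ h3) ENNReal.toReal_nonneg
    have h5 : μ (t ∩ Bs π s) = 0 := by
      rcases (ENNReal.toReal_eq_zero_iff _).1 h4 with h | h
      · exact h
      · exact absurd h (measure_ne_top _ _)
    rw [Set.inter_comm] at h5
    exact h5
  have hbad : μ (⋃ s, Bs π s ∩ {x | Qinf hf hπ μ s x ≤ 0}) = 0 :=
    measure_iUnion_null key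
  rw [ae_iff]
  refine measure_mono_null (fun x hx => ?_) hbad
  simp only [mem_setOf_eq, not_lt] at hx
  exact mem_iUnion.2 ⟨π x, ⟨rfl, hx⟩⟩

/-- The conditional information function at time `k`. -/
noncomputable def fk (μ : MeasureTheory.Measure X) (f : X → X) (π : X → Fin (K + 1))
    (k : ℕ) (x : X) : ℝ :=
  -Real.log (q μ f π (π x) k x)

/-- The limiting information function. -/
noncomputable def finf (hf : Measurable f) (hπ : Measurable π)
    (μ : MeasureTheory.Measure X) (x : X) : ℝ :=
  -Real.log (∑ s, (Bs π s).indicator (Qinf hf hπ μ s) x)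

lemma sum_indicator_eval {G : Fin (K + 1) → X → ℝ} (x : X) :
    ∑ s, (Bs π s).indicator (G s) x = G (π x) x := by
  classical
  have h0 : ∀ s : Fin (K + 1), (Bs π s).indicator (G s) x = if π x = s then G s x else 0 := by
    intro s
    by_cases h : π x = s
    · rw [if_pos h]
      exact Set.indicator_of_mem (show x ∈ Bs π s from h) (G s)
    · rw [if_neg h]
      have hnot : x ∉ Bs π s := fun hm => h (Set.mem_singleton_iff.1 hm)
      exact Set.indicator_of_notMem hnot (G s)
  simp_rw [h0]
  rw [Finset.sum_ite_eq Finset.univ (π x) (fun s => G s x)]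
  simp

lemma finf_eq (hf : Measurable f) (hπ : Measurable π) (x : X) :
    finf hf hπ μ x = -Real.log (Qinf hf hπ μ (π x) x) := by
  unfold finf
  rw [sum_indicator_eval (G := fun s => Qinf hf hπ μ s) x]

lemma fk_eq_sum (k : ℕ) (x : X) :
    fk μ f π k x = ∑ s, (Bs π s).indicator (fun y => -Real.log (q μ f π s k y)) x := by
  rw [sum_indicator_eval (G := fun s y => -Real.log (q μ f π s k y)) x]
  rfl

lemma measurable_fk (hf : Measurable f) (hπ : Measurable π) (k : ℕ) :
    Measurable (fk μ f π k) := by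
  have : Measurable fun x => ∑ s, (Bs π s).indicator
      (fun y => -Real.log (q μ f π s k y)) x := by
    apply Finset.measurable_sum
    intro s _
    exact Measurable.indicator
      ((Real.measurable_log.comp (measurable_q hf hπ s k)).neg) (measurableSet_Bs hπ s)
  have heq : (fun x => ∑ s, (Bs π s).indicator (fun y => -Real.log (q μ f π s k y)) x)
      = fk μ f π k := funext fun x => (fk_eq_sum k x).symm
  rw [← heq]
  exact this

lemma measurable_finf (hf : Measurable f) (hπ : Measurable π) :
    Measurable (finf hf hπ μ) := by
  have hm : (⨆ k, (filt hf hπ) k) ≤ (inferInstance : MeasurableSpace X) :=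
    iSup_le fun k => (filt hf hπ).le k
  have hQ : ∀ s, Measurable (Qinf hf hπ μ s) := fun s =>
    ((stronglyMeasurable_condExp).mono hm).measurable
  apply Measurable.neg
  apply Measurable.log
  apply Finset.measurable_sum
  intro s _
  exact (hQ s).indicator (measurableSet_Bs hπ s)

lemma fk_nonneg [IsProbabilityMeasure μ] (k : ℕ) (x : X) : 0 ≤ fk μ f π k x := by
  unfold fk
  rw [neg_nonneg]
  exact Real.log_nonpos (qv_nonneg _ _ _) (qv_le_one _ _ _)

lemma fk_tendsto_finf [IsProbabilityMeasure μ] (hf : Measurable f) (hπ : Measurable π) :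
    ∀ᵐ x ∂μ, Tendsto (fun k => fk μ f π k x) atTop (nhds (finf hf hπ μ x)) := by
  filter_upwards [Qinf_tendsto (μ := μ) hf hπ, Qinf_pos (μ := μ) hf hπ] with x hx hpos
  rw [finf_eq]
  exact (((Real.continuousAt_log (ne_of_gt hpos)).tendsto.comp (hx (π x))).neg)

/-- Chung–Neveu style maximal inequality. -/
lemma chung_neveu [IsProbabilityMeasure μ] (hf : Measurable f) (hπ : Measurable π)
    {r : ℝ} (hr : 0 < r) :
    μ {x | ∃ k, q μ f π (π x) k x < r} ≤ (K + 1) * ENNReal.ofReal r := by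
  classical
  have key : ∀ s : Fin (K + 1),
      μ (Bs π s ∩ {x | ∃ k, q μ f π s k x < r}) ≤ ENNReal.ofReal r := by
    intro s
    set A : ℕ → Set X :=
      fun j => {x | q μ f π s j x < r ∧ ∀ i, i < j → ¬(q μ f π s i x < r)} with hA_def
    have hAmeas : ∀ j, MeasurableSet (A j) := by
      intro j
      have h1 : MeasurableSet {x | q μ f π s j x < r} :=
        measurableSet_lt (measurable_q hf hπ s j) measurable_const
      have h2 : ∀ i, MeasurableSet {x | ¬(q μ f π s i x < r)} := fun i =>
        (measurableSet_lt (measurable_q hf hπ s i) measurable_const).compl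
      have : A j = {x | q μ f π s j x < r} ∩ ⋂ i, ⋂ (_ : i < j), {x | ¬(q μ f π s i x < r)} := by
        ext x
        simp only [hA_def, mem_setOf_eq, Set.mem_inter_iff, Set.mem_iInter]
      rw [this]
      exact h1.inter (MeasurableSet.iInter fun i => MeasurableSet.iInter fun _ => h2 i)
    have hdisj : Pairwise (Function.onFun Disjoint A) := by
      intro j j' hne
      rcases lt_or_gt_of_ne hne with h | h
      · exact Set.disjoint_left.2 fun x hx hx' => (hx'.2 j h) hx.1
      · exact Set.disjoint_left.2 fun x hx hx' => (hx.2 j' h) hx'.1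
    have hAunion : (⋃ j, A j) = {x | ∃ k, q μ f π s k x < r} := by
      ext x
      simp only [mem_iUnion, hA_def, mem_setOf_eq]
      constructor
      · rintro ⟨j, hj, _⟩; exact ⟨j, hj⟩
      · rintro hx
        exact ⟨Nat.find hx, Nat.find_spec hx, fun i hi => Nat.find_min hx hi⟩
    have hAj : ∀ j, μ (Bs π s ∩ A j) ≤ ENNReal.ofReal r * μ (A j) := by
      intro j
      set V : Set (Fin j → Fin (K + 1)) :=
        {v | qv μ f π s j v < r ∧ ∀ i, ∀ hij : i < j,
          ¬(qv μ f π s i (fun i' => v (Fin.castLE hij.le i')) < r)} with hV_def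
      have hAV : A j = P1 f π j ⁻¹' V := by
        ext x
        simp only [hA_def, Set.mem_preimage, hV_def, mem_setOf_eq]
        have hq : ∀ i (hij : i < j),
            q μ f π s i x = qv μ f π s i (fun i' => P1 f π j x (Fin.castLE hij.le i')) := by
          intro i hij
          have hre : P1 f π i x = fun i' => P1 f π j x (Fin.castLE hij.le i') := by
            funext i'
            simp [P1, Fin.coe_castLE]
          unfold q
          rw [hre]
        constructor
        · rintro ⟨h1, h2⟩
          exact ⟨h1, fun i hij => by rw [← hq i hij]; exact h2 i hij⟩
        · rintro ⟨h1, h2⟩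
          exact ⟨h1, fun i hij => by rw [hq i hij]; exact h2 i hij⟩
      obtain ⟨t, ht_coe⟩ : ∃ t : Finset (Fin j → Fin (K + 1)), ↑t = V :=
        ⟨V.toFinite.toFinset, Set.Finite.coe_toFinset _⟩
      have hAV' : A j = P1 f π j ⁻¹' ↑t := by rw [hAV, ht_coe]
      have hsplit : μ (Bs π s ∩ A j) = ∑ v ∈ t, μ (Bs π s ∩ cyl1 f π j v) := by
        rw [hAV', measure_inter_preimage_finset (measurable_P1 hf hπ j) (measurableSet_Bs hπ s)]
        exact Finset.sum_congr rfl fun v _ => rfl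
      have hsplit2 : μ (A j) = ∑ v ∈ t, μ (cyl1 f π j v) := by
        have hthis := measure_inter_preimage_finset (μ := μ) (measurable_P1 hf hπ j)
          MeasurableSet.univ (B := Set.univ) t
        simp only [Set.univ_inter] at hthis
        rw [hAV', hthis]
        exact Finset.sum_congr rfl fun v _ => rfl
      rw [hsplit, hsplit2, Finset.mul_sum]
      apply Finset.sum_le_sum
      intro v hv
      have hvV : v ∈ V := by rw [← ht_coe]; exact hv
      have hqv : qv μ f π s j v < r := hvV.1
      rcases eq_or_ne (μ (cyl1 f π j v)) 0 with h | h
      · have : μ (Bs π s ∩ cyl1 f π j v) = 0 := measure_mono_null Set.inter_subset_right h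
        rw [this]
        exact zero_le
      · have h1 : (μ (Bs π s ∩ cyl1 f π j v)).toReal
            = (μ (cyl1 f π j v)).toReal * qv μ f π s j v := (toReal_mul_qv s j v).symm
        have h2 : (μ (Bs π s ∩ cyl1 f π j v)).toReal ≤ r * (μ (cyl1 f π j v)).toReal := by
          rw [h1, mul_comm]
          apply mul_le_mul_of_nonneg_right hqv.le ENNReal.toReal_nonneg
        calc μ (Bs π s ∩ cyl1 f π j v)
            = ENNReal.ofReal ((μ (Bs π s ∩ cyl1 f π j v)).toReal) :=
              (ENNReal.ofReal_toReal (measure_ne_top _ _)).symm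
          _ ≤ ENNReal.ofReal (r * (μ (cyl1 f π j v)).toReal) := ENNReal.ofReal_le_ofReal h2
          _ = ENNReal.ofReal r * ENNReal.ofReal ((μ (cyl1 f π j v)).toReal) :=
              ENNReal.ofReal_mul hr.le
          _ = ENNReal.ofReal r * μ (cyl1 f π j v) := by
              rw [ENNReal.ofReal_toReal (measure_ne_top _ _)]
    calc μ (Bs π s ∩ {x | ∃ k, q μ f π s k x < r})
        = μ (⋃ j, Bs π s ∩ A j) := by rw [← Set.inter_iUnion, hAunion]
      _ = ∑' j, μ (Bs π s ∩ A j) := by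
          rw [measure_iUnion (fun j j' hne => Disjoint.mono
            Set.inter_subset_right Set.inter_subset_right (hdisj hne))
            (fun j => (measurableSet_Bs hπ s).inter (hAmeas j))]
      _ ≤ ∑' j, ENNReal.ofReal r * μ (A j) := ENNReal.tsum_le_tsum hAj
      _ = ENNReal.ofReal r * ∑' j, μ (A j) := ENNReal.tsum_mul_left
      _ = ENNReal.ofReal r * μ (⋃ j, A j) := by rw [measure_iUnion hdisj hAmeas]
      _ ≤ ENNReal.ofReal r * 1 := by
          exact mul_le_mul_right prob_le_one _
      _ = ENNReal.ofReal r := mul_one _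
  have hsub : {x | ∃ k, q μ f π (π x) k x < r}
      ⊆ ⋃ s, (Bs π s ∩ {x | ∃ k, q μ f π s k x < r}) := by
    intro x hx
    exact mem_iUnion.2 ⟨π x, ⟨rfl, hx⟩⟩
  calc μ {x | ∃ k, q μ f π (π x) k x < r}
      ≤ μ (⋃ s, (Bs π s ∩ {x | ∃ k, q μ f π s k x < r})) := measure_mono hsub
    _ ≤ ∑ s, μ (Bs π s ∩ {x | ∃ k, q μ f π s k x < r}) := measure_iUnion_fintype_le _ _
    _ ≤ ∑ _s : Fin (K + 1), ENNReal.ofReal r := Finset.sum_le_sum fun s _ => key s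
    _ = (K + 1) * ENNReal.ofReal r := by
        rw [Finset.sum_const, Finset.card_univ, Fintype.card_fin, nsmul_eq_mul]
        push_cast
        ring




lemma q_nonneg (s : Fin (K + 1)) (k : ℕ) (x : X) : 0 ≤ q μ f π s k x :=
  qv_nonneg s k _

lemma fk_gt_subset (t : ℝ) (ht : 0 ≤ t) :
    {x | ∃ k, t < fk μ f π k x} ⊆ {x | ∃ k, q μ f π (π x) k x < Real.exp (-t)} := by
  rintro x ⟨k, hk⟩
  refine ⟨k, ?_⟩
  unfold fk at hk
  rcases eq_or_lt_of_le (q_nonneg (π x) k x) with h | h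
  · rw [← h]
    exact Real.exp_pos _
  · have hlog : Real.log (q μ f π (π x) k x) < -t := by linarith
    calc q μ f π (π x) k x = Real.exp (Real.log (q μ f π (π x) k x)) := (Real.exp_log h).symm
      _ < Real.exp (-t) := Real.exp_lt_exp.2 hlog

lemma meas_fk_gt [IsProbabilityMeasure μ] (hf : Measurable f) (hπ : Measurable π)
    (t : ℝ) (ht : 0 ≤ t) :
    μ {x | ∃ k, t < fk μ f π k x} ≤ (K + 1) * ENNReal.ofReal (Real.exp (-t)) :=
  le_trans (measure_mono (fk_gt_subset t ht)) (chung_neveu hf hπ (Real.exp_pos _))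

/-- Dominating function for the information functions. -/
noncomputable def Fe (μ : MeasureTheory.Measure X) (f : X → X) (π : X → Fin (K + 1))
    (x : X) : ℝ≥0∞ :=
  ⨆ k, ENNReal.ofReal (fk μ f π k x)

lemma measurable_Fe (hf : Measurable f) (hπ : Measurable π) : Measurable (Fe μ f π) :=
  Measurable.iSup fun k => (measurable_fk hf hπ k).ennreal_ofReal

lemma lintegral_Fe_lt_top [IsProbabilityMeasure μ] (hf : Measurable f) (hπ : Measurable π) :
    ∫⁻ x, Fe μ f π x ∂μ < ⊤ := by
  have hsets : ∀ m : ℕ, MeasurableSet {x | ∃ k, (m : ℝ) < fk μ f π k x} := by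
    intro m
    have : {x | ∃ k, (m : ℝ) < fk μ f π k x} = ⋃ k, {x | (m : ℝ) < fk μ f π k x} := by
      ext x; simp
    rw [this]
    exact MeasurableSet.iUnion fun k =>
      measurableSet_lt measurable_const (measurable_fk hf hπ k)
  have hFe_le : ∀ x, Fe μ f π x ≤ ∑' (m : ℕ),
      Set.indicator {y | ∃ k, (m : ℝ) < fk μ f π k y} (fun _ => (1 : ℝ≥0∞)) x := by
    intro x
    refine iSup_le fun k => ?_
    have ha : 0 ≤ fk μ f π k x := fk_nonneg k x
    have h1 : ENNReal.ofReal (fk μ f π k x) ≤ ((⌈fk μ f π k x⌉₊ : ℕ) : ℝ≥0∞) := by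
      rw [← ENNReal.ofReal_natCast]
      exact ENNReal.ofReal_le_ofReal (Nat.le_ceil _)
    have h2 : ((⌈fk μ f π k x⌉₊ : ℕ) : ℝ≥0∞) = ∑ m ∈ Finset.range ⌈fk μ f π k x⌉₊,
        Set.indicator {y | ∃ k', (m : ℝ) < fk μ f π k' y} (fun _ => (1 : ℝ≥0∞)) x := by
      rw [Finset.sum_congr rfl (g := fun _ => (1 : ℝ≥0∞)) (fun m hm => by
        refine Set.indicator_of_mem ?_ _
        exact ⟨k, Nat.lt_ceil.1 (Finset.mem_range.1 hm)⟩)]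
      rw [Finset.sum_const, Finset.card_range, nsmul_eq_mul, mul_one]
    exact le_trans h1 (h2 ▸ ENNReal.sum_le_tsum _)
  have step1 : ∫⁻ x, Fe μ f π x ∂μ ≤ ∑' (m : ℕ), μ {x | ∃ k, (m : ℝ) < fk μ f π k x} := by
    calc ∫⁻ x, Fe μ f π x ∂μ
        ≤ ∫⁻ x, ∑' (m : ℕ),
            Set.indicator {y | ∃ k, (m : ℝ) < fk μ f π k y} (fun _ => (1 : ℝ≥0∞)) x ∂μ :=
          lintegral_mono hFe_le
      _ = ∑' (m : ℕ), ∫⁻ x,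
            Set.indicator {y | ∃ k, (m : ℝ) < fk μ f π k y} (fun _ => (1 : ℝ≥0∞)) x ∂μ :=
          lintegral_tsum fun m => (measurable_const.indicator (hsets m)).aemeasurable
      _ = ∑' (m : ℕ), μ {x | ∃ k, (m : ℝ) < fk μ f π k x} := by
          refine tsum_congr fun m => ?_
          rw [lintegral_indicator (hsets m), setLIntegral_const, one_mul]
  have step2 : ∑' (m : ℕ), μ {x | ∃ k, (m : ℝ) < fk μ f π k x}
      ≤ (K + 1) * (1 - ENNReal.ofReal (Real.exp (-1)))⁻¹ := by
    calc ∑' (m : ℕ), μ {x | ∃ k, (m : ℝ) < fk μ f π k x}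
        ≤ ∑' (m : ℕ), (K + 1) * ENNReal.ofReal (Real.exp (-(m : ℝ))) :=
          ENNReal.tsum_le_tsum fun m => meas_fk_gt hf hπ m (Nat.cast_nonneg m)
      _ = (K + 1) * ∑' (m : ℕ), (ENNReal.ofReal (Real.exp (-1))) ^ m := by
          rw [← ENNReal.tsum_mul_left]
          refine tsum_congr fun m => ?_
          congr 1
          rw [← ENNReal.ofReal_pow (Real.exp_pos _).le, ← Real.exp_nat_mul]
          congr 1
          ring
      _ = (K + 1) * (1 - ENNReal.ofReal (Real.exp (-1)))⁻¹ := by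
          rw [ENNReal.tsum_geometric]
  have hlt1 : ENNReal.ofReal (Real.exp (-1)) < 1 := by
    rw [← ENNReal.ofReal_one]
    apply ENNReal.ofReal_lt_ofReal_iff_of_nonneg (Real.exp_pos _).le |>.2
    calc Real.exp (-1) < Real.exp 0 := Real.exp_lt_exp.2 (by norm_num)
      _ = 1 := Real.exp_zero
  have h1 : ((K : ℝ≥0∞) + 1) ≠ ⊤ :=
    ENNReal.add_ne_top.2 ⟨ENNReal.natCast_ne_top K, ENNReal.one_ne_top⟩
  have h2 : (1 - ENNReal.ofReal (Real.exp (-1)))⁻¹ ≠ ⊤ := by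
    rw [Ne, ENNReal.inv_eq_top, tsub_eq_zero_iff_le]
    exact fun hc => absurd hc (not_le.2 hlt1)
  have hfin : ((K : ℝ≥0∞) + 1) * (1 - ENNReal.ofReal (Real.exp (-1)))⁻¹ < ⊤ :=
    ENNReal.mul_lt_top h1.lt_top h2.lt_top
  exact lt_of_le_of_lt (le_trans step1 step2) hfin



/-- Real-valued dominating function. -/
noncomputable def Ff (μ : MeasureTheory.Measure X) (f : X → X) (π : X → Fin (K + 1))
    (x : X) : ℝ :=
  (Fe μ f π x).toReal

lemma measurable_Ff (hf : Measurable f) (hπ : Measurable π) : Measurable (Ff μ f π) :=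
  (measurable_Fe hf hπ).ennreal_toReal

lemma Ff_nonneg (x : X) : 0 ≤ Ff μ f π x := ENNReal.toReal_nonneg

lemma integrable_Ff [IsProbabilityMeasure μ] (hf : Measurable f) (hπ : Measurable π) :
    Integrable (Ff μ f π) μ :=
  integrable_toReal_of_lintegral_ne_top (measurable_Fe hf hπ).aemeasurable
    (lintegral_Fe_lt_top hf hπ).ne

lemma ae_fk_le_Ff [IsProbabilityMeasure μ] (hf : Measurable f) (hπ : Measurable π) :
    ∀ᵐ x ∂μ, ∀ k, fk μ f π k x ≤ Ff μ f π x := by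
  filter_upwards [ae_lt_top (measurable_Fe hf hπ) (lintegral_Fe_lt_top hf hπ).ne] with x hx k
  have h1 : ENNReal.ofReal (fk μ f π k x) ≤ Fe μ f π x :=
    le_iSup (fun k => ENNReal.ofReal (fk μ f π k x)) k
  calc fk μ f π k x = (ENNReal.ofReal (fk μ f π k x)).toReal :=
        (ENNReal.toReal_ofReal (fk_nonneg k x)).symm
    _ ≤ (Fe μ f π x).toReal := ENNReal.toReal_mono hx.ne h1

lemma integrable_fk [IsProbabilityMeasure μ] (hf : Measurable f) (hπ : Measurable π) (k : ℕ) :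
    Integrable (fk μ f π k) μ := by
  refine (integrable_Ff hf hπ).mono' (measurable_fk hf hπ k).aestronglyMeasurable ?_
  filter_upwards [ae_fk_le_Ff hf hπ] with x hx
  rw [Real.norm_eq_abs, abs_of_nonneg (fk_nonneg k x)]
  exact hx k

lemma ae_finf_bounds [IsProbabilityMeasure μ] (hf : Measurable f) (hπ : Measurable π) :
    ∀ᵐ x ∂μ, 0 ≤ finf hf hπ μ x ∧ finf hf hπ μ x ≤ Ff μ f π x := by
  filter_upwards [fk_tendsto_finf (μ := μ) hf hπ, ae_fk_le_Ff (μ := μ) hf hπ] with x hx hb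
  exact ⟨ge_of_tendsto' hx fun k => fk_nonneg k x, le_of_tendsto' hx hb⟩

lemma integrable_finf [IsProbabilityMeasure μ] (hf : Measurable f) (hπ : Measurable π) :
    Integrable (finf hf hπ μ) μ := by
  refine (integrable_Ff hf hπ).mono' (measurable_finf hf hπ).aestronglyMeasurable ?_
  filter_upwards [ae_finf_bounds hf hπ] with x hx
  rw [Real.norm_eq_abs, abs_of_nonneg hx.1]
  exact hx.2

/-- Tail supremum of deviations. -/
noncomputable def GK (hf : Measurable f) (hπ : Measurable π) (μ : MeasureTheory.Measure X)
    (M : ℕ) (x : X) : ℝ :=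
  (⨆ k, ENNReal.ofReal (|fk μ f π (M + k) x - finf hf hπ μ x|)).toReal

lemma measurable_GK (hf : Measurable f) (hπ : Measurable π) (M : ℕ) :
    Measurable (GK hf hπ μ M) :=
  (Measurable.iSup fun k =>
    (((measurable_fk hf hπ (M + k)).sub (measurable_finf hf hπ)).abs).ennreal_ofReal).ennreal_toReal

lemma GK_nonneg (hf : Measurable f) (hπ : Measurable π) (M : ℕ) (x : X) :
    0 ≤ GK hf hπ μ M x := ENNReal.toReal_nonneg

lemma ae_GK_props [IsProbabilityMeasure μ] (hf : Measurable f) (hπ : Measurable π) :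
    ∀ᵐ x ∂μ, (∀ M, (∀ k, M ≤ k → |fk μ f π k x - finf hf hπ μ x| ≤ GK hf hπ μ M x)
        ∧ GK hf hπ μ M x ≤ 2 * Ff μ f π x)
      ∧ Tendsto (fun M => GK hf hπ μ M x) atTop (nhds 0) := by
  filter_upwards [ae_fk_le_Ff (μ := μ) hf hπ, ae_finf_bounds (μ := μ) hf hπ,
    fk_tendsto_finf (μ := μ) hf hπ] with x hb hf2 ht
  have habs : ∀ k, |fk μ f π k x - finf hf hπ μ x| ≤ 2 * Ff μ f π x := by
    intro k
    rw [abs_sub_le_iff]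
    constructor
    · have := hb k; have := hf2.1; linarith
    · have := fk_nonneg (μ := μ) (f := f) (π := π) k x; have := hf2.2; linarith
  have hsup_le : ∀ M, (⨆ k, ENNReal.ofReal (|fk μ f π (M + k) x - finf hf hπ μ x|))
      ≤ ENNReal.ofReal (2 * Ff μ f π x) :=
    fun M => iSup_le fun k => ENNReal.ofReal_le_ofReal (habs (M + k))
  have hne : ∀ M, (⨆ k, ENNReal.ofReal (|fk μ f π (M + k) x - finf hf hπ μ x|)) ≠ ⊤ :=
    fun M => (lt_of_le_of_lt (hsup_le M) ENNReal.ofReal_lt_top).ne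
  refine ⟨fun M => ⟨fun k hk => ?_, ?_⟩, ?_⟩
  · obtain ⟨j, rfl⟩ : ∃ j, k = M + j := ⟨k - M, by omega⟩
    calc |fk μ f π (M + j) x - finf hf hπ μ x|
        = (ENNReal.ofReal (|fk μ f π (M + j) x - finf hf hπ μ x|)).toReal :=
          (ENNReal.toReal_ofReal (abs_nonneg _)).symm
      _ ≤ GK hf hπ μ M x := ENNReal.toReal_mono (hne M)
          (le_iSup (fun j => ENNReal.ofReal (|fk μ f π (M + j) x - finf hf hπ μ x|)) j)
  · calc GK hf hπ μ M x
        ≤ (ENNReal.ofReal (2 * Ff μ f π x)).toReal := ENNReal.toReal_mono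
          ENNReal.ofReal_ne_top (hsup_le M)
      _ = 2 * Ff μ f π x := ENNReal.toReal_ofReal
          (by have := Ff_nonneg (μ := μ) (f := f) (π := π) x; linarith)
  · rw [Metric.tendsto_atTop]
    intro ε hε
    have hconv := Metric.tendsto_atTop.1 ht (ε / 2) (by linarith)
    obtain ⟨N, hN⟩ := hconv
    refine ⟨N, fun M hM => ?_⟩
    have hGK_le : GK hf hπ μ M x ≤ ε / 2 := by
      have hsup2 : (⨆ k, ENNReal.ofReal (|fk μ f π (M + k) x - finf hf hπ μ x|))
          ≤ ENNReal.ofReal (ε / 2) := by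
        refine iSup_le fun k => ENNReal.ofReal_le_ofReal ?_
        have := hN (M + k) (by omega)
        rw [Real.dist_eq] at this
        exact this.le
      calc GK hf hπ μ M x ≤ (ENNReal.ofReal (ε / 2)).toReal :=
            ENNReal.toReal_mono ENNReal.ofReal_ne_top hsup2
        _ = ε / 2 := ENNReal.toReal_ofReal (by linarith)
    rw [Real.dist_eq, abs_of_nonneg (by linarith [GK_nonneg (μ := μ) hf hπ M x] : (0:ℝ) ≤ GK hf hπ μ M x - 0)]
    simp only [sub_zero]
    linarith

lemma integrable_GK [IsProbabilityMeasure μ] (hf : Measurable f) (hπ : Measurable π) (M : ℕ) :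
    Integrable (GK hf hπ μ M) μ := by
  refine (((integrable_Ff hf hπ).const_mul 2).mono'
    (measurable_GK hf hπ M).aestronglyMeasurable ?_)
  filter_upwards [ae_GK_props hf hπ] with x hx
  rw [Real.norm_eq_abs, abs_of_nonneg (GK_nonneg hf hπ M x)]
  exact (hx.1 M).2

lemma tendsto_integral_GK [IsProbabilityMeasure μ] (hf : Measurable f) (hπ : Measurable π) :
    Tendsto (fun M => ∫ x, GK hf hπ μ M x ∂μ) atTop (nhds 0) := by
  have h := tendsto_integral_of_dominated_convergence (μ := μ)
    (F := fun M => GK hf hπ μ M) (f := fun _ => (0 : ℝ)) (fun x => 2 * Ff μ f π x)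
    (fun M => (measurable_GK hf hπ M).aestronglyMeasurable)
    ((integrable_Ff hf hπ).const_mul 2)
    (fun M => by
      filter_upwards [ae_GK_props hf hπ] with x hx
      rw [Real.norm_eq_abs, abs_of_nonneg (GK_nonneg hf hπ M x)]
      exact (hx.1 M).2)
    (by filter_upwards [ae_GK_props hf hπ] with x hx; exact hx.2)
  simpa using h



lemma measurableSet_cell (hf : Measurable f) (hπ : Measurable π) (n : ℕ) (x : X) :
    MeasurableSet (cell f π n x) :=
  measurable_P0 hf hπ n (measurableSet_singleton _)

lemma cell_zero (x : X) : cell f π 0 x = Set.univ := by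
  ext y
  simp only [cell, Set.mem_preimage, Set.mem_singleton_iff, Set.mem_univ, iff_true]
  exact Subsingleton.elim _ _

lemma cell_succ (n : ℕ) (x : X) :
    cell f π (n + 1) x = Bs π (π x) ∩ cyl1 f π n (P1 f π n x) := by
  ext y
  simp only [cell, Set.mem_preimage, Set.mem_singleton_iff, Set.mem_inter_iff, Bs, cyl1,
    funext_iff]
  constructor
  · intro h
    refine ⟨?_, fun i => ?_⟩
    · have h0 := h 0
      simpa [P0] using h0
    · have hs := h i.succ
      simpa [P0, P1, Fin.val_succ] using hs
  · rintro ⟨h0, h1⟩ i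
    induction i using Fin.cases with
    | zero => simpa [P0] using h0
    | succ j =>
      have := h1 j
      simpa [P0, P1, Fin.val_succ] using this

lemma cyl1_eq_preimage (n : ℕ) (x : X) :
    cyl1 f π n (P1 f π n x) = f ⁻¹' (cell f π n (f x)) := by
  ext y
  simp only [cyl1, cell, Set.mem_preimage, Set.mem_singleton_iff, funext_iff, P1, P0]
  constructor
  · intro h i
    have := h i
    simpa [Function.iterate_succ_apply] using this
  · intro h i
    have := h i
    simpa [Function.iterate_succ_apply] using this

lemma measure_Dn_eq (hmp : MeasurePreserving f μ μ) (hf : Measurable f) (hπ : Measurable π)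
    (n : ℕ) (x : X) :
    μ (cyl1 f π n (P1 f π n x)) = μ (cell f π n (f x)) := by
  rw [cyl1_eq_preimage, hmp.measure_preimage (measurableSet_cell hf hπ n (f x)).nullMeasurableSet]

/-- Information of the `n`-cell. -/
noncomputable def glog (μ : MeasureTheory.Measure X) (f : X → X) (π : X → Fin (K + 1))
    (n : ℕ) (x : X) : ℝ :=
  -Real.log ((μ (cell f π n x)).toReal)

lemma glog_succ (hmp : MeasurePreserving f μ μ) (hf : Measurable f) (hπ : Measurable π)
    [IsProbabilityMeasure μ] (n : ℕ) (x : X)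
    (h1 : 0 < μ (Bs π (π x) ∩ cyl1 f π n (P1 f π n x))) :
    glog μ f π (n + 1) x = fk μ f π n x + glog μ f π n (f x) := by
  have h2 : 0 < μ (cyl1 f π n (P1 f π n x)) :=
    lt_of_lt_of_le h1 (measure_mono Set.inter_subset_right)
  have ha : 0 < (μ (Bs π (π x) ∩ cyl1 f π n (P1 f π n x))).toReal :=
    ENNReal.toReal_pos h1.ne' (measure_ne_top _ _)
  have hb : 0 < (μ (cyl1 f π n (P1 f π n x))).toReal :=
    ENNReal.toReal_pos h2.ne' (measure_ne_top _ _)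
  unfold glog fk q qv
  rw [cell_succ]
  rw [Real.log_div ha.ne' hb.ne']
  rw [← measure_Dn_eq hmp hf hπ n x]
  ring

/-- Pointwise goodness condition. -/
def Pgood (μ : MeasureTheory.Measure X) (f : X → X) (π : X → Fin (K + 1)) (x : X) : Prop :=
  ∀ k, 0 < μ (Bs π (π x) ∩ cyl1 f π k (P1 f π k x))

lemma measurableSet_Pgood (hf : Measurable f) (hπ : Measurable π) :
    MeasurableSet {x | Pgood μ f π x} := by
  have : {x | Pgood μ f π x} = ⋂ k, ⋃ s, ⋃ v, ⋃ (_ : 0 < μ (Bs π s ∩ cyl1 f π k v)),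
      (Bs π s ∩ cyl1 f π k v) := by
    ext x
    simp only [Pgood, mem_setOf_eq, Set.mem_iInter, Set.mem_iUnion]
    constructor
    · intro h k
      exact ⟨π x, P1 f π k x, h k, ⟨rfl, rfl⟩⟩
    · intro h k
      obtain ⟨s, v, hsv, hx1, hx2⟩ := h k
      have hs : π x = s := hx1
      have hv : P1 f π k x = v := hx2
      rw [hs, hv]
      exact hsv
  rw [this]
  exact MeasurableSet.iInter fun k => MeasurableSet.iUnion fun s => MeasurableSet.iUnion fun v =>
    MeasurableSet.iUnion fun _ => (measurableSet_Bs hπ s).inter (measurableSet_cyl1 hf hπ k v)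

lemma ae_orbit (hmp : MeasurePreserving f μ μ) {P : X → Prop} (hP : MeasurableSet {x | P x})
    (h : ∀ᵐ x ∂μ, P x) : ∀ᵐ x ∂μ, ∀ j, P (f^[j] x) := by
  rw [ae_all_iff]
  intro j
  rw [ae_iff] at h ⊢
  have heq : {x | ¬P (f^[j] x)} = f^[j] ⁻¹' {x | ¬P x} := rfl
  rw [heq]
  have := (hmp.iterate j).measure_preimage (s := {x | ¬P x})
    (hP.compl.nullMeasurableSet)
  rw [this]
  exact h

lemma glog_decomp (hmp : MeasurePreserving f μ μ) (hf : Measurable f) (hπ : Measurable π)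
    [IsProbabilityMeasure μ] :
    ∀ᵐ x ∂μ, ∀ n, glog μ f π n x
      = ∑ j ∈ Finset.range n, fk μ f π (n - 1 - j) (f^[j] x) := by
  have horb := ae_orbit hmp (measurableSet_Pgood (μ := μ) hf hπ) (ae_cell_pos (μ := μ) hf hπ)
  filter_upwards [horb] with x hx n
  have claim : ∀ m, ∀ y : X, (∀ j, Pgood μ f π (f^[j] y)) →
      glog μ f π m y = ∑ j ∈ Finset.range m, fk μ f π (m - 1 - j) (f^[j] y) := by
    intro m
    induction m with
    | zero =>
      intro y hy
      simp [glog, cell_zero, Real.log_one]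
    | succ m ih =>
      intro y hy
      have hy0 : Pgood μ f π y := by
        have := hy 0
        simpa using this
      have hrec := glog_succ hmp hf hπ m y (hy0 m)
      have hnext : ∀ j, Pgood μ f π (f^[j] (f y)) := by
        intro j
        have := hy (j + 1)
        rwa [Function.iterate_succ_apply] at this
      rw [hrec, ih (f y) hnext]
      rw [Finset.sum_range_succ']
      have e0 : m + 1 - 1 - 0 = m := by omega
      have hterm : ∀ j, fk μ f π (m + 1 - 1 - (j + 1)) (f^[j + 1] y)
          = fk μ f π (m - 1 - j) (f^[j] (f y)) := by
        intro j
        have e1 : m + 1 - 1 - (j + 1) = m - 1 - j := by omega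
        rw [e1, Function.iterate_succ_apply]
      rw [Finset.sum_congr rfl (fun j _ => hterm j), e0]
      simp only [Function.iterate_zero_apply]
      ring
  exact claim n x hx

lemma integrable_glog [IsProbabilityMeasure μ] (hf : Measurable f) (hπ : Measurable π) (n : ℕ) :
    Integrable (glog μ f π n) μ :=
  integrable_comp_finite (measurable_P0 hf hπ n)
    (fun v => -Real.log ((μ (P0 f π n ⁻¹' {v})).toReal))

lemma integral_glog [IsProbabilityMeasure μ] (hf : Measurable f) (hπ : Measurable π) (n : ℕ) :
    ∫ x, glog μ f π n x ∂μ
      = ∑ v : Fin n → Fin (K + 1), Real.negMulLog ((μ (P0 f π n ⁻¹' {v})).toReal) := by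
  have heq : glog μ f π n
      = fun x => (fun v => -Real.log ((μ (P0 f π n ⁻¹' {v})).toReal)) (P0 f π n x) := rfl
  rw [heq, integral_comp_finite (measurable_P0 hf hπ n)]
  refine Finset.sum_congr rfl fun v _ => ?_
  rw [Real.negMulLog]
  ring

lemma integral_comp_iterate' [IsProbabilityMeasure μ] (hmp : MeasurePreserving f μ μ)
    {g : X → ℝ} (hg : Measurable g) (j : ℕ) :
    ∫ x, g (f^[j] x) ∂μ = ∫ x, g x ∂μ := by
  rw [← integral_map (hmp.iterate j).measurable.aemeasurable
    hg.stronglyMeasurable.aestronglyMeasurable, (hmp.iterate j).map_eq]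

lemma integral_glog_eq_sum [IsProbabilityMeasure μ] (hmp : MeasurePreserving f μ μ)
    (hf : Measurable f) (hπ : Measurable π) (n : ℕ) :
    ∫ x, glog μ f π n x ∂μ = ∑ k ∈ Finset.range n, ∫ x, fk μ f π k x ∂μ := by
  have h1 : ∫ x, glog μ f π n x ∂μ
      = ∫ x, (∑ j ∈ Finset.range n, fk μ f π (n - 1 - j) (f^[j] x)) ∂μ := by
    refine integral_congr_ae ?_
    filter_upwards [glog_decomp hmp hf hπ] with x hx
    exact hx n
  rw [h1, integral_finset_sum]
  · have h2 : ∀ j ∈ Finset.range n, ∫ x, fk μ f π (n - 1 - j) (f^[j] x) ∂μ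
        = ∫ x, fk μ f π (n - 1 - j) x ∂μ := fun j _ =>
      integral_comp_iterate' hmp (measurable_fk hf hπ _) j
    rw [Finset.sum_congr rfl h2]
    exact Finset.sum_range_reflect (fun k => ∫ x, fk μ f π k x ∂μ) n
  · intro j _
    exact integrable_comp_iterate hmp (measurable_fk hf hπ _) (integrable_fk hf hπ _) j

lemma tendsto_integral_fk [IsProbabilityMeasure μ] (hf : Measurable f) (hπ : Measurable π) :
    Tendsto (fun k => ∫ x, fk μ f π k x ∂μ) atTop (nhds (∫ x, finf hf hπ μ x ∂μ)) := by
  refine tendsto_integral_of_dominated_convergence (Ff μ f π)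
    (fun k => (measurable_fk hf hπ k).aestronglyMeasurable)
    (integrable_Ff hf hπ) (fun k => ?_) (fk_tendsto_finf hf hπ)
  filter_upwards [ae_fk_le_Ff hf hπ] with x hx
  rw [Real.norm_eq_abs, abs_of_nonneg (fk_nonneg k x)]
  exact hx k



lemma integral_finf_eq [IsProbabilityMeasure μ] (herg : Ergodic f μ)
    (hf : Measurable f) (hπ : Measurable π) {h : ℝ}
    (hh : Tendsto (fun n : ℕ =>
        (∑ v : Fin n → Fin (K + 1), Real.negMulLog ((μ (P0 f π n ⁻¹' {v})).toReal)) / n)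
      atTop (nhds h)) :
    ∫ x, finf hf hπ μ x ∂μ = h := by
  have hces : Tendsto (fun n : ℕ =>
      (∑ v : Fin n → Fin (K + 1), Real.negMulLog ((μ (P0 f π n ⁻¹' {v})).toReal)) / n)
      atTop (nhds (∫ x, finf hf hπ μ x ∂μ)) := by
    have hc := (tendsto_integral_fk (μ := μ) hf hπ).cesaro
    refine hc.congr fun n => ?_
    rw [← integral_glog_eq_sum herg.toMeasurePreserving hf hπ n, integral_glog hf hπ n,
      div_eq_inv_mul]
  exact tendsto_nhds_unique hces hh

/-- **SMB lower bound**: a.e. eventually `μ(C_n(x)) ≤ e^{-(h-δ)n}` in `glog` form. -/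
theorem smb_lower [IsProbabilityMeasure μ] (herg : Ergodic f μ)
    (hf : Measurable f) (hπ : Measurable π) {h δ : ℝ} (hδ : 0 < δ)
    (hh : Tendsto (fun n : ℕ =>
        (∑ v : Fin n → Fin (K + 1), Real.negMulLog ((μ (P0 f π n ⁻¹' {v})).toReal)) / n)
      atTop (nhds h)) :
    ∀ᵐ x ∂μ, ∀ᶠ n in atTop, (h - δ) * n ≤ glog μ f π n x := by
  have hmp := herg.toMeasurePreserving
  have hint : ∫ x, finf hf hπ μ x ∂μ = h := integral_finf_eq herg hf hπ hh
  -- choose the tail index M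
  obtain ⟨M, hM⟩ : ∃ M, ∫ x, GK hf hπ μ M x ∂μ < δ / 4 := by
    have := (tendsto_integral_GK (μ := μ) hf hπ).eventually
      (eventually_lt_nhds (show (0:ℝ) < δ / 4 by linarith))
    exact this.exists
  set gk := ∫ x, GK hf hπ μ M x ∂μ with hgk_def
  -- pointwise goodness predicate
  set Pb : X → Prop := fun y => (∀ k, fk μ f π k y ≤ Ff μ f π y)
    ∧ (0 ≤ finf hf hπ μ y ∧ finf hf hπ μ y ≤ Ff μ f π y)
    ∧ (∀ k, M ≤ k → |fk μ f π k y - finf hf hπ μ y| ≤ GK hf hπ μ M y) with hPb_def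
  have hPbmeas : MeasurableSet {y | Pb y} := by
    have h1 : MeasurableSet {y | ∀ k, fk μ f π k y ≤ Ff μ f π y} := by
      have : {y | ∀ k, fk μ f π k y ≤ Ff μ f π y}
          = ⋂ k, {y | fk μ f π k y ≤ Ff μ f π y} := by ext y; simp
      rw [this]
      exact MeasurableSet.iInter fun k =>
        measurableSet_le (measurable_fk hf hπ k) (measurable_Ff hf hπ)
    have h2 : MeasurableSet {y | 0 ≤ finf hf hπ μ y ∧ finf hf hπ μ y ≤ Ff μ f π y} :=
      (measurableSet_le measurable_const (measurable_finf hf hπ)).inter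
        (measurableSet_le (measurable_finf hf hπ) (measurable_Ff hf hπ))
    have h3 : MeasurableSet {y | ∀ k, M ≤ k →
        |fk μ f π k y - finf hf hπ μ y| ≤ GK hf hπ μ M y} := by
      have : {y | ∀ k, M ≤ k → |fk μ f π k y - finf hf hπ μ y| ≤ GK hf hπ μ M y}
          = ⋂ k, ⋂ (_ : M ≤ k),
            {y | |fk μ f π k y - finf hf hπ μ y| ≤ GK hf hπ μ M y} := by ext y; simp
      rw [this]
      exact MeasurableSet.iInter fun k => MeasurableSet.iInter fun _ =>
        measurableSet_le (((measurable_fk hf hπ k).sub (measurable_finf hf hπ)).abs)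
          (measurable_GK hf hπ M)
    exact (h1.inter (h2.inter h3))
  have hPbae : ∀ᵐ y ∂μ, Pb y := by
    filter_upwards [ae_fk_le_Ff (μ := μ) hf hπ, ae_finf_bounds (μ := μ) hf hπ,
      ae_GK_props (μ := μ) hf hπ] with y h1 h2 h3
    exact ⟨h1, h2, (h3.1 M).1⟩
  have horb := ae_orbit hmp hPbmeas hPbae
  -- Birkhoff limits
  have hbA := birkhoff herg hf (measurable_finf hf hπ) (integrable_finf hf hπ)
  have hbB := birkhoff herg hf (measurable_GK hf hπ M) (integrable_GK hf hπ M)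
  have hbC := birkhoff herg hf (measurable_Ff hf hπ) (integrable_Ff hf hπ)
  filter_upwards [glog_decomp hmp hf hπ, horb, hbA, hbB, hbC] with x hdec hgood hA hB hC
  set A : ℕ → ℝ := fun n => bS f (finf hf hπ μ) n x with hA_def
  set B : ℕ → ℝ := fun n => bS f (GK hf hπ μ M) n x with hB_def
  set C : ℕ → ℝ := fun n => bS f (Ff μ f π) n x with hC_def
  rw [hint] at hA
  -- key inequality
  have hkey : ∀ n, A n - B n - 2 * (C n - C (n - M)) ≤ glog μ f π n x := by
    intro n
    rw [hdec n]
    have hterm : ∀ j, j < n → finf hf hπ μ (f^[j] x)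
        - |fk μ f π (n - 1 - j) (f^[j] x) - finf hf hπ μ (f^[j] x)|
        ≤ fk μ f π (n - 1 - j) (f^[j] x) := by
      intro j _
      have := abs_sub_abs_le_abs_sub (fk μ f π (n - 1 - j) (f^[j] x)) (finf hf hπ μ (f^[j] x))
      have h1 := abs_le.1 (le_refl |fk μ f π (n - 1 - j) (f^[j] x) - finf hf hπ μ (f^[j] x)|)
      have h2 : -(|fk μ f π (n - 1 - j) (f^[j] x) - finf hf hπ μ (f^[j] x)|)
          ≤ fk μ f π (n - 1 - j) (f^[j] x) - finf hf hπ μ (f^[j] x) :=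
        neg_abs_le _
      linarith
    have hsum1 : A n - ∑ j ∈ Finset.range n,
        |fk μ f π (n - 1 - j) (f^[j] x) - finf hf hπ μ (f^[j] x)|
        ≤ ∑ j ∈ Finset.range n, fk μ f π (n - 1 - j) (f^[j] x) := by
      rw [hA_def]
      simp only [bS]
      rw [← Finset.sum_sub_distrib]
      exact Finset.sum_le_sum fun j hj => hterm j (Finset.mem_range.1 hj)
    have herr : ∑ j ∈ Finset.range n,
        |fk μ f π (n - 1 - j) (f^[j] x) - finf hf hπ μ (f^[j] x)|
        ≤ B n + 2 * (C n - C (n - M)) := by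
      have hsplit : Finset.range n = Finset.range (n - M) ∪ Finset.Ico (n - M) n := by
        rw [Finset.range_eq_Ico, Finset.range_eq_Ico, Finset.Ico_union_Ico_eq_Ico (by omega) (by omega)]
      rw [hsplit, Finset.sum_union (by
        rw [Finset.range_eq_Ico]
        exact Finset.Ico_disjoint_Ico_consecutive 0 (n - M) n)]
      have hpart1 : ∑ j ∈ Finset.range (n - M),
          |fk μ f π (n - 1 - j) (f^[j] x) - finf hf hπ μ (f^[j] x)| ≤ B n := by
        have hstep : ∑ j ∈ Finset.range (n - M),
            |fk μ f π (n - 1 - j) (f^[j] x) - finf hf hπ μ (f^[j] x)|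
            ≤ ∑ j ∈ Finset.range (n - M), GK hf hπ μ M (f^[j] x) := by
          refine Finset.sum_le_sum fun j hj => ?_
          have hjlt := Finset.mem_range.1 hj
          exact (hgood j).2.2 (n - 1 - j) (by omega)
        refine le_trans hstep ?_
        rw [hB_def]
        simp only [bS]
        refine Finset.sum_le_sum_of_subset_of_nonneg ?_ (fun j _ _ => GK_nonneg hf hπ M _)
        exact Finset.range_subset_range.2 (by omega)
      have hpart2 : ∑ j ∈ Finset.Ico (n - M) n,
          |fk μ f π (n - 1 - j) (f^[j] x) - finf hf hπ μ (f^[j] x)|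
          ≤ 2 * (C n - C (n - M)) := by
        have hstep : ∑ j ∈ Finset.Ico (n - M) n,
            |fk μ f π (n - 1 - j) (f^[j] x) - finf hf hπ μ (f^[j] x)|
            ≤ ∑ j ∈ Finset.Ico (n - M) n, 2 * Ff μ f π (f^[j] x) := by
          refine Finset.sum_le_sum fun j hj => ?_
          have h1 := (hgood j).1 (n - 1 - j)
          have h2 := (hgood j).2.1
          have h3 := fk_nonneg (μ := μ) (f := f) (π := π) (n - 1 - j) (f^[j] x)
          rw [abs_sub_le_iff]
          constructor <;> linarith [h2.1, h2.2]
        refine le_trans hstep ?_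
        rw [hC_def]
        simp only [bS]
        rw [← Finset.mul_sum, Finset.sum_Ico_eq_sub _ (by omega : n - M ≤ n)]
      linarith
    calc A n - B n - 2 * (C n - C (n - M))
        ≤ A n - ∑ j ∈ Finset.range n,
            |fk μ f π (n - 1 - j) (f^[j] x) - finf hf hπ μ (f^[j] x)| := by linarith
      _ ≤ ∑ j ∈ Finset.range n, fk μ f π (n - 1 - j) (f^[j] x) := hsum1
  -- limit of the lower bound
  have hD : Tendsto (fun n => C (n - M) / n) atTop (nhds (∫ y, Ff μ f π y ∂μ)) := by
    have h1 : Tendsto (fun n : ℕ => C (n - M) / ((n - M : ℕ) : ℝ)) atTop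
        (nhds (∫ y, Ff μ f π y ∂μ)) :=
      hC.comp (tendsto_sub_atTop_nat M)
    have h2 : Tendsto (fun n : ℕ => ((n - M : ℕ) : ℝ) / (n : ℝ)) atTop (nhds 1) := by
      have h3 : Tendsto (fun n : ℕ => 1 - (M : ℝ) / (n : ℝ)) atTop (nhds 1) := by
        have hz := tendsto_const_div_atTop_nhds_zero_nat (M : ℝ)
        have h4 := Tendsto.sub (tendsto_const_nhds :
          Tendsto (fun _ : ℕ => (1:ℝ)) atTop (nhds 1)) hz
        simpa using h4
      refine Tendsto.congr' ?_ h3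
      filter_upwards [eventually_ge_atTop (M + 1)] with n hn
      have hn0 : (0:ℝ) < (n : ℝ) := by
        have : 0 < n := by omega
        exact_mod_cast this
      rw [Nat.cast_sub (by omega)]
      field_simp
    have h5 := h1.mul h2
    rw [mul_one] at h5
    refine Tendsto.congr' ?_ h5
    filter_upwards [eventually_ge_atTop (M + 1)] with n hn
    have hnM : 0 < n - M := by omega
    have hnM' : ((n - M : ℕ) : ℝ) ≠ 0 := by
      have : (0:ℝ) < ((n - M : ℕ) : ℝ) := by exact_mod_cast hnM
      linarith
    field_simp
  have hRlim : Tendsto (fun n => (A n - B n - 2 * (C n - C (n - M))) / n) atTop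
      (nhds (h - gk - 2 * (∫ y, Ff μ f π y ∂μ - ∫ y, Ff μ f π y ∂μ))) := by
    have := ((hA.sub hB).sub (((hC.sub hD)).const_mul 2))
    refine Tendsto.congr ?_ this
    intro n
    ring
  have hlim2 : h - δ < h - gk - 2 * (∫ y, Ff μ f π y ∂μ - ∫ y, Ff μ f π y ∂μ) := by
    have hgk0 : 0 ≤ gk := by
      rw [hgk_def]
      exact integral_nonneg fun y => GK_nonneg hf hπ M y
    have : h - gk - 2 * (∫ y, Ff μ f π y ∂μ - ∫ y, Ff μ f π y ∂μ) = h - gk := by ring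
    rw [this]
    linarith
  have hev := hRlim.eventually (eventually_gt_nhds hlim2)
  filter_upwards [hev, eventually_ge_atTop 1] with n hn hn1
  have hn0 : (0:ℝ) < (n : ℝ) := by exact_mod_cast hn1
  have hk := hkey n
  have hlt : (h - δ) * n < A n - B n - 2 * (C n - C (n - M)) := by
    have h2 := (lt_div_iff₀ hn0).1 hn
    linarith
  linarith


end SMBdefs

-- FINAL (placed after all sections)

open Filter MeasureTheory Set
open scoped ENNReal

/-- Given an ergodic measure `μ`, a finite Borel partition (encoded as a
measurable map `π : X → Fin (K+1)`) with entropy `h_μ(f,ξ) = h` finite, `δ > 0`, an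
open set `U` with `μ(U) ≤ δ` and `Z` with `μ(Z) > 0`, there are `A ⊆ Z` with
`μ(A) ≥ μ(Z) − δ` and `N` such that for `x ∈ A`, `n ≥ N`: the orbit of `x` visits
`U` at most `2δn` times up to time `n`, and `μ(C_{ξ_n}(x)) ≤ exp(−(h−δ)n)`. -/
theorem stmt8 {X : Type*} [MetricSpace X] [CompactSpace X]
    [MeasurableSpace X] [BorelSpace X]
    (f : X → X) (hf : Continuous f) (μ : Measure X) [IsProbabilityMeasure μ]
    (herg : Ergodic f μ)
    (K : ℕ) (π : X → Fin (K + 1)) (hπ : Measurable π)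
    (h : ℝ)
    (hh : Tendsto (fun n : ℕ =>
        (∑ s : Fin n → Fin (K + 1), Real.negMulLog
          ((μ {y : X | ∀ i : Fin n, π (f^[(i : ℕ)] y) = s i}).toReal)) / n)
      atTop (nhds h))
    (δ : ℝ) (hδ : 0 < δ) (U : Set X) (hU : IsOpen U)
    (hUμ : μ U ≤ ENNReal.ofReal δ)
    (Z : Set X) (hZ : MeasurableSet Z) (hZpos : 0 < μ Z) :
    ∃ A : Set X, A ⊆ Z ∧ MeasurableSet A ∧ μ Z - ENNReal.ofReal δ ≤ μ A ∧
      ∃ N : ℕ, ∀ x ∈ A, ∀ n : ℕ, N ≤ n →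
        (({l : ℕ | l < n ∧ f^[l] x ∈ U}.ncard : ℝ) ≤ 2 * δ * n ∧
          μ {y : X | ∀ i : Fin n, π (f^[(i : ℕ)] y) = π (f^[(i : ℕ)] x)}
            ≤ ENNReal.ofReal (Real.exp (-(h - δ) * n))) := by
  classical
  have hfm : Measurable f := hf.measurable
  -- the statement's cylinder sets are our `cell`s
  have hcell_eq : ∀ (n : ℕ) (x : X),
      {y : X | ∀ i : Fin n, π (f^[(i : ℕ)] y) = π (f^[(i : ℕ)] x)} = cell f π n x := by
    intro n x
    ext y
    simp only [cell, Set.mem_preimage, Set.mem_singleton_iff, funext_iff, P0, mem_setOf_eq]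
  have hsymb_eq : ∀ (n : ℕ) (s : Fin n → Fin (K + 1)),
      {y : X | ∀ i : Fin n, π (f^[(i : ℕ)] y) = s i} = P0 f π n ⁻¹' {s} := by
    intro n s
    ext y
    simp only [Set.mem_preimage, Set.mem_singleton_iff, funext_iff, P0, mem_setOf_eq]
  have hhP : Tendsto (fun n : ℕ =>
      (∑ v : Fin n → Fin (K + 1), Real.negMulLog ((μ (P0 f π n ⁻¹' {v})).toReal)) / n)
      atTop (nhds h) := by
    refine hh.congr fun n => ?_
    congr 1
    exact Finset.sum_congr rfl fun s _ => by rw [hsymb_eq n s]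
  -- visits to U
  set g : X → ℝ := U.indicator (fun _ => (1 : ℝ)) with hg_def
  have hgmeas : Measurable g := measurable_const.indicator hU.measurableSet
  have hgint : Integrable g μ := (integrable_const 1).indicator hU.measurableSet
  have hIg : ∫ y, g y ∂μ = (μ U).toReal := by
    rw [hg_def, integral_indicator_const _ hU.measurableSet, smul_eq_mul, mul_one]
    rfl
  have hbirk := birkhoff herg hfm hgmeas hgint
  have hcount : ∀ (x : X) (n : ℕ),
      (({l : ℕ | l < n ∧ f^[l] x ∈ U}.ncard : ℝ)) = bS f g n x := by
    intro x n
    have hset : {l : ℕ | l < n ∧ f^[l] x ∈ U}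
        = ↑((Finset.range n).filter (fun l => f^[l] x ∈ U)) := by
      ext l
      simp [Finset.mem_filter, Finset.mem_range]
    rw [hset, Set.ncard_coe_finset, hg_def]
    unfold bS
    rw [Finset.sum_indicator_eq_sum_filter]
    simp
  have hvisit : ∀ᵐ x ∂μ, ∀ᶠ n in atTop,
      (({l : ℕ | l < n ∧ f^[l] x ∈ U}.ncard : ℝ) ≤ 2 * δ * n) := by
    filter_upwards [hbirk] with x hx
    have hUd : (μ U).toReal < 2 * δ := by
      have h1 : (μ U).toReal ≤ δ := by
        have h2 := ENNReal.toReal_mono ENNReal.ofReal_ne_top hUμ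
        rwa [ENNReal.toReal_ofReal hδ.le] at h2
      linarith
    rw [hIg] at hx
    have hev := hx.eventually (eventually_lt_nhds hUd)
    filter_upwards [hev, eventually_ge_atTop 1] with n h1 h2
    rw [hcount x n]
    have hn0 : (0 : ℝ) < n := by exact_mod_cast h2
    have h3 := (div_lt_iff₀ hn0).1 h1
    nlinarith
  -- SMB cell bound
  have hsmb := smb_lower herg hfm hπ hδ hhP
  have hcellb : ∀ᵐ x ∂μ, ∀ᶠ n in atTop,
      μ (cell f π n x) ≤ ENNReal.ofReal (Real.exp (-(h - δ) * n)) := by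
    filter_upwards [hsmb] with x hx
    filter_upwards [hx] with n hn
    rcases eq_or_lt_of_le (ENNReal.toReal_nonneg (a := μ (cell f π n x))) with h0 | h0
    · have hz : μ (cell f π n x) = 0 := by
        rcases (ENNReal.toReal_eq_zero_iff _).1 h0.symm with hcase | hcase
        · exact hcase
        · exact absurd hcase (measure_ne_top μ _)
      rw [hz]
      exact zero_le
    · have hlog : Real.log ((μ (cell f π n x)).toReal) ≤ -(h - δ) * n := by
        unfold glog at hn
        linarith
      have hle : (μ (cell f π n x)).toReal ≤ Real.exp (-(h - δ) * n) :=
        (Real.log_le_iff_le_exp h0).1 hlog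
      calc μ (cell f π n x) = ENNReal.ofReal ((μ (cell f π n x)).toReal) :=
            (ENNReal.ofReal_toReal (measure_ne_top _ _)).symm
        _ ≤ ENNReal.ofReal (Real.exp (-(h - δ) * n)) := ENNReal.ofReal_le_ofReal hle
  -- good sets
  set good : ℕ → X → Prop := fun n x =>
    (({l : ℕ | l < n ∧ f^[l] x ∈ U}.ncard : ℝ) ≤ 2 * δ * n)
      ∧ μ (cell f π n x) ≤ ENNReal.ofReal (Real.exp (-(h - δ) * n)) with hgood_def
  have hgood_meas : ∀ n, MeasurableSet {x | good n x} := by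
    intro n
    have hm1 : MeasurableSet {x | (({l : ℕ | l < n ∧ f^[l] x ∈ U}.ncard : ℝ) ≤ 2 * δ * n)} := by
      have heq : {x | (({l : ℕ | l < n ∧ f^[l] x ∈ U}.ncard : ℝ) ≤ 2 * δ * n)}
          = {x | bS f g n x ≤ 2 * δ * n} := by
        ext x
        rw [mem_setOf_eq, mem_setOf_eq, hcount x n]
      rw [heq]
      exact measurableSet_le (bS_measurable hfm hgmeas n) measurable_const
    have hm2 : MeasurableSet {x | μ (cell f π n x)
        ≤ ENNReal.ofReal (Real.exp (-(h - δ) * n))} := by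
      have heq : {x | μ (cell f π n x) ≤ ENNReal.ofReal (Real.exp (-(h - δ) * n))}
          = P0 f π n ⁻¹' {v | μ (P0 f π n ⁻¹' {v}) ≤ ENNReal.ofReal (Real.exp (-(h - δ) * n))} := by
        ext x
        simp only [cell, Set.mem_preimage, mem_setOf_eq]
      rw [heq]
      exact measurable_P0 hfm hπ n (Set.to_countable _).measurableSet
    exact hm1.inter hm2
  set AN : ℕ → Set X := fun N => Z ∩ {x | ∀ n, N ≤ n → good n x} with hAN_def
  have hAN_meas : ∀ N, MeasurableSet (AN N) := by
    intro N
    refine hZ.inter ?_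
    have : {x | ∀ n, N ≤ n → good n x} = ⋂ n, ⋂ (_ : N ≤ n), {x | good n x} := by
      ext x; simp
    rw [this]
    exact MeasurableSet.iInter fun n => MeasurableSet.iInter fun _ => hgood_meas n
  have hmono : Monotone AN := by
    intro N N' hNN x hx
    exact ⟨hx.1, fun n hn => hx.2 n (le_trans hNN hn)⟩
  have hAN_sub : ∀ N, AN N ⊆ Z := fun N => Set.inter_subset_left
  have hUnion : μ (⋃ N, AN N) = μ Z := by
    refine le_antisymm (measure_mono (Set.iUnion_subset hAN_sub)) ?_
    have hnull : μ (Z \ ⋃ N, AN N) = 0 := by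
      have hsub : Z \ (⋃ N, AN N) ⊆ {x | ¬ ∀ᶠ n in atTop, good n x} := by
        rintro x ⟨hxZ, hxU⟩
        intro hev
        obtain ⟨N, hN⟩ := eventually_atTop.1 hev
        exact hxU (Set.mem_iUnion.2 ⟨N, hxZ, hN⟩)
      refine measure_mono_null hsub ?_
      have hae : ∀ᵐ x ∂μ, ∀ᶠ n in atTop, good n x := by
        filter_upwards [hvisit, hcellb] with x h1 h2
        filter_upwards [h1, h2] with n hn1 hn2
        exact ⟨hn1, hn2⟩
      rw [ae_iff] at hae
      exact hae
    calc μ Z ≤ μ ((⋃ N, AN N) ∪ (Z \ ⋃ N, AN N)) := by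
          refine measure_mono fun x hx => ?_
          by_cases hxU : x ∈ ⋃ N, AN N
          · exact Or.inl hxU
          · exact Or.inr ⟨hx, hxU⟩
      _ ≤ μ (⋃ N, AN N) + μ (Z \ ⋃ N, AN N) := measure_union_le _ _
      _ = μ (⋃ N, AN N) := by rw [hnull, add_zero]
  have htends : Tendsto (fun N => μ (AN N)) atTop (nhds (μ Z)) := by
    have := tendsto_measure_iUnion_atTop (μ := μ) hmono
    rwa [hUnion] at this
  have hfinal : ∀ N, (∀ x ∈ AN N, ∀ n : ℕ, N ≤ n →
      (({l : ℕ | l < n ∧ f^[l] x ∈ U}.ncard : ℝ) ≤ 2 * δ * n ∧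
        μ {y : X | ∀ i : Fin n, π (f^[(i : ℕ)] y) = π (f^[(i : ℕ)] x)}
          ≤ ENNReal.ofReal (Real.exp (-(h - δ) * n)))) := by
    intro N x hx n hn
    obtain ⟨h1, h2⟩ := hx.2 n hn
    refine ⟨h1, ?_⟩
    rw [hcell_eq n x]
    exact h2
  rcases le_or_gt (μ Z) (ENNReal.ofReal δ) with hle | hlt
  · refine ⟨AN 0, hAN_sub 0, hAN_meas 0, ?_, 0, hfinal 0⟩
    rw [tsub_eq_zero_iff_le.2 hle]
    exact zero_le
  · have hsub_lt : μ Z - ENNReal.ofReal δ < μ Z := by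
      refine ENNReal.sub_lt_self (measure_ne_top μ Z) hZpos.ne' ?_
      simpa [ENNReal.ofReal_eq_zero] using hδ
    have hev := htends.eventually (eventually_gt_nhds hsub_lt)
    obtain ⟨N, hN⟩ := hev.exists
    exact ⟨AN N, hAN_sub N, hAN_meas N, hN.le, N, hfinal N⟩
end

section
/- Entropy Distribution Principle: Let (X,d) be a compact metric space, f : X → X continuous, Z ⊆ X a Borel set, ε > 0 and s ≥ 0. Suppose there exist Borel probability measures μ_k on X, a constant K > 0 and N ∈ ℕ such that limsup_{k→∞} μ_k(B_n(x,ε)) ≤ K e^{−ns} for every Bowen ball B_n(x,ε) with B_n(x,ε) ∩ Z ≠ ∅ and n ≥ N, and suppose some weak-* limit measure ν of (μ_k) satisfies ν(Z) > 0. Then h_top(Z,ε) ≥ s. -/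
open Filter MeasureTheory
open scoped ENNReal

set_option maxHeartbeats 1000000

noncomputable section

/-- Bowen ball `B_n(x,ε)`. -/
def bowenBall {X : Type*} [MetricSpace X] (f : X → X) (n : ℕ) (x : X) (ε : ℝ) :
    Set X :=
  {y : X | ∀ j < n, dist (f^[j] x) (f^[j] y) < ε}

/-- `M(Z,α,ε,N)`: infimum over countable covers of `Z` by Bowen balls of length
`≥ N` of `Σ exp(−α nᵢ)`. -/
def Mcover {X : Type*} [MetricSpace X] (f : X → X) (Z : Set X) (α ε : ℝ)
    (N : ℕ) : ℝ≥0∞ :=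
  sInf {r : ℝ≥0∞ | ∃ C : Set (X × ℕ), C.Countable ∧ (∀ p ∈ C, N ≤ p.2) ∧
    Z ⊆ (⋃ p ∈ C, bowenBall f p.2 p.1 ε) ∧
    r = ∑' p : C, ENNReal.ofReal (Real.exp (-α * (p : X × ℕ).2))}

/-- `m(Z,α,ε) = lim_{N→∞} M(Z,α,ε,N)` (the limit of the nondecreasing family). -/
def mcover {X : Type*} [MetricSpace X] (f : X → X) (Z : Set X) (α ε : ℝ) :
    ℝ≥0∞ :=
  ⨆ N : ℕ, Mcover f Z α ε N

/-- Pesin–Pitskel (Bowen) topological entropy of `Z` at scale `ε`. -/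
def htopScale {X : Type*} [MetricSpace X] (f : X → X) (Z : Set X) (ε : ℝ) : ℝ :=
  sInf {α : ℝ | mcover f Z α ε = 0}

lemma bowenBall_isOpen {X : Type*} [MetricSpace X] {f : X → X} (hf : Continuous f)
    (n : ℕ) (x : X) (ε : ℝ) : IsOpen (bowenBall f n x ε) := by
  have : bowenBall f n x ε = ⋂ j ∈ Set.Iio n, (f^[j]) ⁻¹' Metric.ball (f^[j] x) ε := by
    ext y
    simp [bowenBall, Metric.mem_ball, dist_comm]
  rw [this]
  exact (Set.finite_Iio n).isOpen_biInter fun j _ =>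
    (Metric.isOpen_ball).preimage (hf.iterate j)

/-- If `ν` is a weak-* cluster point of `μ`, then for open `U`,
`ν U ≤ limsup μ_k U`. -/
lemma cluster_measure_le_limsup {X : Type*} [MetricSpace X]
    [MeasurableSpace X] [BorelSpace X]
    {μ : ℕ → ProbabilityMeasure X} {ν : ProbabilityMeasure X}
    (hν : MapClusterPt ν atTop μ) {U : Set X} (hU : IsOpen U) :
    (ν : Measure X) U ≤ atTop.limsup (fun k : ℕ => (μ k : Measure X) U) := by
  set F : Filter ℕ := atTop ⊓ Filter.comap μ (nhds ν) with hF
  have hmap : Filter.map μ F = Filter.map μ atTop ⊓ nhds ν := Filter.push_pull μ atTop (nhds ν)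
  have hne : (Filter.map μ F).NeBot := by
    rw [hmap, inf_comm]
    exact hν
  have hFne : F.NeBot := (Filter.map_neBot_iff μ).mp hne
  have htendsto : Filter.Tendsto μ F (nhds ν) := by
    rw [Filter.Tendsto, hmap]
    exact inf_le_right
  have h1 : (ν : Measure X) U ≤ F.liminf (fun k : ℕ => (μ k : Measure X) U) :=
    ProbabilityMeasure.le_liminf_measure_open_of_tendsto htendsto hU
  refine h1.trans ((Filter.liminf_le_limsup).trans ?_)
  exact Filter.limsup_le_limsup_of_le inf_le_left

/-- Entropy Distribution Principle: if probability measures `μ_k`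
satisfy `limsup_k μ_k(B_n(x,ε)) ≤ K e^{−ns}` for all Bowen balls meeting `Z` with
`n ≥ N`, and some weak-* cluster point `ν` of `(μ_k)` has `ν(Z) > 0`, then
`h_top(Z,ε) ≥ s`. -/
theorem stmt10 {X : Type*} [MetricSpace X] [CompactSpace X]
    [MeasurableSpace X] [BorelSpace X]
    (f : X → X) (hf : Continuous f) (Z : Set X) (hZ : MeasurableSet Z)
    (ε : ℝ) (hε : 0 < ε) (s : ℝ) (hs : 0 ≤ s)
    (μ : ℕ → ProbabilityMeasure X) (K : ℝ) (hK : 0 < K) (N : ℕ)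
    (hlim : ∀ (x : X) (n : ℕ), N ≤ n → (bowenBall f n x ε ∩ Z).Nonempty →
      Filter.atTop.limsup (fun k : ℕ => (μ k : Measure X) (bowenBall f n x ε))
        ≤ ENNReal.ofReal (K * Real.exp (-(n : ℝ) * s)))
    (ν : ProbabilityMeasure X) (hν : MapClusterPt ν atTop μ)
    (hνZ : 0 < (ν : Measure X) Z) :
    s ≤ htopScale f Z ε := by
  classical
  have hXne : Nonempty X := ν.nonempty
  -- a finite cover of X by balls of radius ε/2
  obtain ⟨t, ht⟩ := IsCompact.elim_finite_subcover isCompact_univ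
    (fun x : X => Metric.ball x (ε / 2)) (fun x => Metric.isOpen_ball)
    (fun x _ => Set.mem_iUnion.mpr ⟨x, Metric.mem_ball_self (by linarith)⟩)
  have htne : t.Nonempty := by
    rcases hXne with ⟨x⟩
    rcases Set.mem_iUnion₂.mp (ht (Set.mem_univ x)) with ⟨c, hc, _⟩
    exact ⟨c, hc⟩
  set m : ℕ := t.card with hm
  have hm1 : 1 ≤ m := Finset.card_pos.mpr htne
  have hmR : (1:ℝ) ≤ (m:ℝ) := by exact_mod_cast hm1
  -- choice of a center for each point
  have hcf : ∀ y : X, ∃ c : {c // c ∈ t}, y ∈ Metric.ball (c : X) (ε / 2) := by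
    intro y
    rcases Set.mem_iUnion₂.mp (ht (Set.mem_univ y)) with ⟨c, hc, hyc⟩
    exact ⟨⟨c, hc⟩, hyc⟩
  choose cfun hcfun using hcf
  -- PART A: the set {α | mcover = 0} is nonempty
  have hSne : (Real.log (m:ℝ) + 1) ∈ {α : ℝ | mcover f Z α ε = 0} := by
    show mcover f Z (Real.log m + 1) ε = 0
    set α : ℝ := Real.log m + 1 with hα
    rw [mcover, ENNReal.iSup_eq_zero]
    intro N'
    have key : ∀ n : ℕ, N' ≤ n →
        Mcover f Z α ε N' ≤ ENNReal.ofReal (Real.exp (-(n : ℝ))) := by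
      intro n hn
      -- words and representatives
      set W := (Fin n → {c // c ∈ t}) with hW
      have hword : ∀ x : X, x ∈ Set.univ → True := fun _ _ => trivial
      set word : X → W := fun x j => cfun (f^[(j : ℕ)] x) with hworddef
      set rep : W → X := fun w =>
        if h : ∃ x : X, word x = w then h.choose else Classical.arbitrary X with hrep
      set g : W → X × ℕ := fun w => (rep w, n) with hg
      set C : Set (X × ℕ) := Set.range g with hC
      have hcnt : C.Countable := (Set.finite_range g).countable
      have hlen : ∀ p ∈ C, N' ≤ p.2 := by
        rintro p ⟨w, rfl⟩
        exact hn
      have hcov : Z ⊆ ⋃ p ∈ C, bowenBall f p.2 p.1 ε := by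
        intro x _
        have hex : ∃ x' : X, word x' = word x := ⟨x, rfl⟩
        have hrepx : word (rep (word x)) = word x := by
          simp only [hrep, dif_pos hex]
          exact hex.choose_spec
        refine Set.mem_biUnion ⟨word x, rfl⟩ ?_
        intro j hj
        have h1 : f^[j] (rep (word x)) ∈ Metric.ball (word (rep (word x)) ⟨j, hj⟩ : X) (ε/2) :=
          hcfun _
        have h2 : f^[j] x ∈ Metric.ball (word x ⟨j, hj⟩ : X) (ε/2) := hcfun _
        rw [hrepx] at h1
        have := dist_triangle (f^[j] (rep (word x))) (word x ⟨j, hj⟩ : X) (f^[j] x)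
        rw [Metric.mem_ball, dist_comm] at h2
        rw [Metric.mem_ball] at h1
        calc dist (f^[j] (rep (word x))) (f^[j] x) ≤ _ + _ := this
          _ < ε/2 + ε/2 := by exact add_lt_add h1 h2
          _ = ε := by ring
      have hsum : (∑' p : C, ENNReal.ofReal (Real.exp (-α * (p : X × ℕ).2)))
          ≤ ENNReal.ofReal (Real.exp (-(n : ℝ))) := by
        have hsurj : Function.Surjective (Set.rangeFactorization g) :=
          Set.rangeFactorization_surjective
        have h1 : (∑' p : C, ENNReal.ofReal (Real.exp (-α * (p : X × ℕ).2)))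
            ≤ ∑' w : W, ENNReal.ofReal (Real.exp (-α * ((g w).2 : ℝ))) :=
          ENNReal.tsum_le_tsum_comp_of_surjective hsurj _
        have h2 : (∑' w : W, ENNReal.ofReal (Real.exp (-α * ((g w).2 : ℝ))))
            = (Fintype.card W : ℝ≥0∞) * ENNReal.ofReal (Real.exp (-α * n)) := by
          rw [tsum_fintype]
          simp [hg, Finset.sum_const, nsmul_eq_mul]
        have hcardW : (Fintype.card W : ℝ) = (m : ℝ) ^ n := by
          simp [hW, Fintype.card_fun, hm]
        have h3 : (Fintype.card W : ℝ≥0∞) * ENNReal.ofReal (Real.exp (-α * n))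
            ≤ ENNReal.ofReal (Real.exp (-(n : ℝ))) := by
          rw [show (Fintype.card W : ℝ≥0∞) = ENNReal.ofReal (Fintype.card W : ℝ) by
            rw [ENNReal.ofReal_natCast]]
          rw [← ENNReal.ofReal_mul (by positivity)]
          apply ENNReal.ofReal_le_ofReal
          rw [hcardW]
          have hmexp : (m : ℝ) ^ n = Real.exp (n * Real.log m) := by
            rw [Real.exp_nat_mul, Real.exp_log (by linarith)]
          rw [hmexp, ← Real.exp_add]
          apply Real.exp_le_exp.mpr
          rw [hα]
          ring_nf
          simp
        exact h1.trans (h2.le.trans h3)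
      calc Mcover f Z α ε N'
          ≤ ∑' p : C, ENNReal.ofReal (Real.exp (-α * (p : X × ℕ).2)) :=
            sInf_le ⟨C, hcnt, hlen, hcov, rfl⟩
        _ ≤ ENNReal.ofReal (Real.exp (-(n : ℝ))) := hsum
    -- take n → ∞
    have htend : Filter.Tendsto (fun k : ℕ => ENNReal.ofReal (Real.exp (-((N' + k : ℕ) : ℝ))))
        atTop (nhds 0) := by
      have h0 : Filter.Tendsto (fun k : ℕ => (((N' + k : ℕ)) : ℝ)) atTop atTop := by
        push_cast
        exact tendsto_atTop_add_const_left atTop _ tendsto_natCast_atTop_atTop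
      have h1 : Filter.Tendsto (fun k : ℕ => -(((N' + k : ℕ)) : ℝ)) atTop atBot :=
        Filter.tendsto_neg_atBot_iff.mpr h0
      have h2 : Filter.Tendsto (fun k : ℕ => Real.exp (-(((N' + k : ℕ)) : ℝ))) atTop (nhds 0) :=
        Real.tendsto_exp_atBot.comp h1
      have := (ENNReal.continuous_ofReal.tendsto 0).comp h2
      simpa [Function.comp_def] using this
    have hle0 : Mcover f Z α ε N' ≤ 0 :=
      ge_of_tendsto' htend (fun k => key (N' + k) (Nat.le_add_right _ _))
    exact le_antisymm hle0 (zero_le)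
  -- PART B: every element of the set is ≥ s
  refine le_csInf ⟨_, hSne⟩ ?_
  intro α hα
  by_contra hcon
  push_neg at hcon
  have hM0 : Mcover f Z α ε N = 0 := by
    have := le_iSup (fun N => Mcover f Z α ε N) N
    rw [show (⨆ N : ℕ, Mcover f Z α ε N) = mcover f Z α ε from rfl, hα] at this
    exact le_antisymm this (zero_le)
  set K' : ℝ≥0∞ := ENNReal.ofReal K with hK'
  have hK'0 : K' ≠ 0 := by simp [hK', hK, ENNReal.ofReal_eq_zero, not_le]
  have hK'top : K' ≠ ⊤ := ENNReal.ofReal_ne_top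
  set δ : ℝ≥0∞ := (ν : Measure X) Z / K' with hδ
  have hδ0 : 0 < δ := ENNReal.div_pos (ne_of_gt hνZ) hK'top
  have hlt : Mcover f Z α ε N < δ := by rw [hM0]; exact hδ0
  rw [Mcover, sInf_lt_iff] at hlt
  obtain ⟨r, ⟨C, hcnt, hlen, hcov, hr⟩, hrδ⟩ := hlt
  set C' : Set (X × ℕ) := {p ∈ C | (bowenBall f p.2 p.1 ε ∩ Z).Nonempty} with hC'
  have hsub : C' ⊆ C := fun p hp => hp.1
  have hcov' : Z ⊆ ⋃ p ∈ C', bowenBall f p.2 p.1 ε := by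
    intro y hy
    rcases Set.mem_iUnion₂.mp (hcov hy) with ⟨p, hp, hyp⟩
    exact Set.mem_biUnion ⟨hp, ⟨y, hyp, hy⟩⟩ hyp
  have hstep1 : (ν : Measure X) Z ≤ ∑' p : C', (ν : Measure X) (bowenBall f p.1.2 p.1.1 ε) := by
    calc (ν : Measure X) Z ≤ (ν : Measure X) (⋃ p ∈ C', bowenBall f p.2 p.1 ε) :=
          measure_mono hcov'
      _ ≤ ∑' p : C', (ν : Measure X) (bowenBall f p.1.2 p.1.1 ε) :=
          measure_biUnion_le _ (hcnt.mono hsub) _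
  have hterm : ∀ p : C', (ν : Measure X) (bowenBall f p.1.2 p.1.1 ε)
      ≤ K' * ENNReal.ofReal (Real.exp (-α * p.1.2)) := by
    rintro ⟨p, hpC, hpne⟩
    have hball := cluster_measure_le_limsup hν (bowenBall_isOpen hf p.2 p.1 ε)
    have hbound := hlim p.1 p.2 (hlen p hpC) hpne
    refine (hball.trans hbound).trans ?_
    rw [ENNReal.ofReal_mul hK.le]
    apply mul_le_mul_right
    apply ENNReal.ofReal_le_ofReal
    apply Real.exp_le_exp.mpr
    have : α * p.2 ≤ s * p.2 :=
      mul_le_mul_of_nonneg_right hcon.le (Nat.cast_nonneg _)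
    nlinarith
  have hstep2 : (ν : Measure X) Z ≤ K' * r := by
    calc (ν : Measure X) Z
        ≤ ∑' p : C', (ν : Measure X) (bowenBall f p.1.2 p.1.1 ε) := hstep1
      _ ≤ ∑' p : C', K' * ENNReal.ofReal (Real.exp (-α * p.1.2)) :=
          ENNReal.tsum_le_tsum hterm
      _ = K' * ∑' p : C', ENNReal.ofReal (Real.exp (-α * p.1.2)) := ENNReal.tsum_mul_left
      _ ≤ K' * ∑' p : C, ENNReal.ofReal (Real.exp (-α * (p : X × ℕ).2)) := by
          have hmono := ENNReal.tsum_mono_subtype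
            (fun p : X × ℕ => ENNReal.ofReal (Real.exp (-α * p.2))) hsub
          exact mul_le_mul_right hmono K'
      _ = K' * r := by rw [hr]
  have hfinal : (ν : Measure X) Z < (ν : Measure X) Z := by
    calc (ν : Measure X) Z ≤ K' * r := hstep2
      _ < K' * δ := by
          exact (ENNReal.mul_lt_mul_iff_right hK'0 hK'top).mpr hrδ
      _ = (ν : Measure X) Z := ENNReal.mul_div_cancel hK'0 hK'top
  exact lt_irrefl _ hfinal


end
end
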